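/- arXiv:2302.07809 — 13 statements merged into one kernel-verified Lean document; each statement's English description precedes it below -/
import Mathlib

section
/- Let V and Q be real Hilbert spaces, let b : V × Q → ℝ be a bounded bilinear form satisfying the inf-sup condition: there exists m > 0 such that for every u ∈ Q, sup over nonzero v ∈ V of b(v,u)/‖v‖ is at least m‖u‖. Let F be a continuous linear functional on V that vanishes on the kernel V₀ = {v ∈ V : b(v,q) = 0 for all q ∈ Q}. Then there exists a unique u ∈ Q such that b(v,u) = F(v) for all v ∈ V, and this solution depends continuously on the data: ‖u‖ ≤ (1/m)‖F‖. -/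
open scoped RealInnerProductSpace


/-- Well-posedness of the mixed variational problem. Given real Hilbert
spaces `V`, `Q`, a bounded bilinear form `b` satisfying the inf-sup condition with
constant `m > 0`, and a continuous linear functional `F` vanishing on the kernel
`V₀ = {v : ∀ q, b v q = 0}`, there is a unique `u ∈ Q` with `b v u = F v` for all `v`,
and the solution satisfies `‖u‖ ≤ (1/m) ‖F‖`. -/
theorem statement0
    {V Q : Type*}
    [NormedAddCommGroup V] [InnerProductSpace ℝ V] [CompleteSpace V]
    [NormedAddCommGroup Q] [InnerProductSpace ℝ Q] [CompleteSpace Q]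
    (b : V →ₗ[ℝ] Q →ₗ[ℝ] ℝ)
    (hbdd : ∃ M : ℝ, ∀ (v : V) (u : Q), |b v u| ≤ M * ‖v‖ * ‖u‖)
    (m : ℝ) (hm : 0 < m)
    (hinfsup : ∀ u : Q, m * ‖u‖ ≤ ⨆ v : {v : V // v ≠ 0}, b v.1 u / ‖v.1‖)
    (F : V →L[ℝ] ℝ)
    (hF : ∀ v : V, (∀ q : Q, b v q = 0) → F v = 0) :
    (∃! u : Q, ∀ v : V, b v u = F v) ∧
      ∀ u : Q, (∀ v : V, b v u = F v) → ‖u‖ ≤ (1 / m) * ‖F‖ := by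
  classical
  obtain ⟨M, hM⟩ := hbdd
  set M' : ℝ := max M 0 with hM'def
  have hM'0 : 0 ≤ M' := le_max_right _ _
  have hMb : ∀ (v : V) (u : Q), |b v u| ≤ M' * ‖v‖ * ‖u‖ := fun v u =>
    (hM v u).trans (by
      apply mul_le_mul_of_nonneg_right _ (norm_nonneg u)
      exact mul_le_mul_of_nonneg_right (le_max_left M 0) (norm_nonneg v))
  -- the continuous functional `b · u` for each `u`
  let G : Q → (V →L[ℝ] ℝ) := fun u =>
    LinearMap.mkContinuous (b.flip u) (M' * ‖u‖) (fun v => by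
      have h := hMb v u
      rw [Real.norm_eq_abs]
      calc |b.flip u v| = |b v u| := rfl
        _ ≤ M' * ‖v‖ * ‖u‖ := h
        _ = M' * ‖u‖ * ‖v‖ := by ring)
  -- the Riesz representative of `b · u`
  let Bf : Q → V := fun u => (InnerProductSpace.toDual ℝ V).symm (G u)
  have hB : ∀ (u : Q) (v : V), ⟪Bf u, v⟫ = b v u := fun u v => by
    simp only [Bf, InnerProductSpace.toDual_symm_apply]
    rfl
  have hub : ∀ u : Q, ‖Bf u‖ ≤ M' * ‖u‖ := fun u => by
    have : ‖Bf u‖ = ‖G u‖ := LinearIsometryEquiv.norm_map _ _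
    rw [this]
    exact LinearMap.mkContinuous_norm_le _ (by positivity) _
  -- lower bound from the inf-sup condition
  have hlow : ∀ u : Q, m * ‖u‖ ≤ ‖Bf u‖ := by
    intro u
    refine (hinfsup u).trans ?_
    by_cases h : Nonempty {v : V // v ≠ 0}
    · apply ciSup_le
      rintro ⟨v, hv⟩
      rw [div_le_iff₀ (norm_pos_iff.mpr hv)]
      calc b v u = ⟪Bf u, v⟫ := (hB u v).symm
        _ ≤ ‖Bf u‖ * ‖v‖ := real_inner_le_norm _ _
    · haveI : IsEmpty {v : V // v ≠ 0} := not_nonempty_iff.mp h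
      rw [Real.iSup_of_isEmpty]
      exact norm_nonneg _
  -- linearity of Bf
  have hadd : ∀ u w : Q, Bf (u + w) = Bf u + Bf w := fun u w =>
    ext_inner_right ℝ fun v => by
      rw [hB, inner_add_left, hB, hB, map_add]
  have hsmul : ∀ (c : ℝ) (u : Q), Bf (c • u) = c • Bf u := fun c u =>
    ext_inner_right ℝ fun v => by
      rw [hB, real_inner_smul_left, hB, map_smul, smul_eq_mul]
  let Bl : Q →ₗ[ℝ] V :=
    { toFun := Bf, map_add' := hadd, map_smul' := hsmul }
  let Bc : Q →L[ℝ] V := Bl.mkContinuous M' hub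
  have hBc : ∀ u : Q, Bc u = Bf u := fun u => rfl
  -- closed range
  have hanti : AntilipschitzWith (⟨1 / m, by positivity⟩ : NNReal) Bc :=
    Bc.antilipschitz_of_bound (fun u => by
      have := hlow u
      rw [hBc]
      push_cast
      show ‖u‖ ≤ (1 / m) * ‖Bf u‖
      rw [one_div, ← div_eq_inv_mul, le_div_iff₀ hm]
      linarith)
  have hclosed : IsClosed (Set.range Bc) := hanti.isClosed_range Bc.uniformContinuous
  set S : Submodule ℝ V := LinearMap.range (Bc : Q →ₗ[ℝ] V) with hSdef
  have hSclosed : IsClosed (S : Set V) := by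
    rw [hSdef, LinearMap.coe_range]; exact hclosed
  haveI : CompleteSpace S := hSclosed.completeSpace_coe
  have horth : Sᗮᗮ = S := Submodule.orthogonal_orthogonal S
  -- Riesz representative of F
  set f : V := (InnerProductSpace.toDual ℝ V).symm F with hfdef
  have hf : ∀ v : V, ⟪f, v⟫ = F v := fun v => InnerProductSpace.toDual_symm_apply
  have hfnorm : ‖f‖ = ‖F‖ := LinearIsometryEquiv.norm_map _ F
  have hfS : f ∈ S := by
    rw [← horth, Submodule.mem_orthogonal]
    intro w hw
    have hw' : ∀ q : Q, b w q = 0 := fun q => by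
      have h0 := (Submodule.mem_orthogonal S w).mp hw (Bc q) ⟨q, rfl⟩
      rw [hBc, hB] at h0
      exact h0
    rw [real_inner_comm, hf, hF w hw']
  obtain ⟨u₀, hu₀⟩ := hfS
  -- any solution u has Bf u = f
  have hsol : ∀ u : Q, (∀ v : V, b v u = F v) → Bf u = f := fun u hu =>
    ext_inner_right ℝ fun v => by rw [hB, hf, hu]
  have hbound : ∀ u : Q, (∀ v : V, b v u = F v) → ‖u‖ ≤ (1 / m) * ‖F‖ := by
    intro u hu
    have h1 : m * ‖u‖ ≤ ‖F‖ := by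
      calc m * ‖u‖ ≤ ‖Bf u‖ := hlow u
        _ = ‖f‖ := by rw [hsol u hu]
        _ = ‖F‖ := hfnorm
    rw [one_div, ← div_eq_inv_mul, le_div_iff₀ hm]
    linarith
  have hex : ∀ v : V, b v u₀ = F v := fun v => by
    rw [← hf, ← hB u₀ v, ← hBc, ← ContinuousLinearMap.coe_coe, hu₀]
  refine ⟨⟨u₀, hex, ?_⟩, hbound⟩
  intro u hu
  have h1 : Bf u = Bf u₀ := by rw [hsol u hu, hsol u₀ hex]
  have h2 : Bf (u - u₀) = 0 := by
    have h3 : Bl (u - u₀) = 0 := by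
      rw [map_sub]
      show Bf u - Bf u₀ = 0
      rw [h1, sub_self]
    exact h3
  have h4 : ‖u - u₀‖ ≤ 0 := by
    have h5 := hlow (u - u₀)
    rw [h2, norm_zero] at h5
    nlinarith [norm_nonneg (u - u₀)]
  have h6 : u - u₀ = 0 := norm_le_zero_iff.mp h4
  exact sub_eq_zero.mp h6
end

section
/- Let V and Q be real Hilbert spaces, b : V × Q → ℝ a bounded bilinear form, and let V_h ⊆ V and M_h ⊆ Q be finite-dimensional subspaces satisfying the discrete inf-sup condition: there exists m_h > 0 such that for every p_h ∈ M_h, sup over nonzero v_h ∈ V_h of b(v_h,p_h)/‖v_h‖ is at least m_h‖p_h‖. Then for every continuous linear functional F on V, there exists a unique pair (w_h, u_h) ∈ V_h × M_h satisfying ⟨w_h, v_h⟩_V + b(v_h, u_h) = F(v_h) for all v_h ∈ V_h and b(w_h, q_h) = 0 for all q_h ∈ M_h. -/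
open scoped RealInnerProductSpace


open scoped RealInnerProductSpace in
/-- Auxiliary: the linear map encoding the discrete saddle point system. -/
noncomputable def sysMap {V Q : Type*}
    [NormedAddCommGroup V] [InnerProductSpace ℝ V]
    [NormedAddCommGroup Q] [InnerProductSpace ℝ Q]
    (b : V →ₗ[ℝ] Q →ₗ[ℝ] ℝ) (Vh : Submodule ℝ V) (Mh : Submodule ℝ Q) :
    (Vh × Mh) →ₗ[ℝ] (Module.Dual ℝ Vh × Module.Dual ℝ Mh) :=
  { toFun := fun wu =>
      ({ toFun := fun v => ⟪(wu.1 : V), (v : V)⟫ + b (v : V) (wu.2 : Q)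
         map_add' := by
           intro x y
           simp [inner_add_right]
           ring
         map_smul' := by
           intro c x
           simp [inner_smul_right]
           ring },
       { toFun := fun q => b (wu.1 : V) (q : Q)
         map_add' := by intro x y; simp
         map_smul' := by intro c x; simp })
    map_add' := by
      intro x y
      ext v
      · simp [inner_add_left]; ring
      · simp
    map_smul' := by
      intro c x
      ext v
      · simp [inner_smul_left]; ring
      · simp }

open scoped RealInnerProductSpace in
@[simp] theorem sysMap_fst {V Q : Type*}
    [NormedAddCommGroup V] [InnerProductSpace ℝ V]
    [NormedAddCommGroup Q] [InnerProductSpace ℝ Q]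
    (b : V →ₗ[ℝ] Q →ₗ[ℝ] ℝ) (Vh : Submodule ℝ V) (Mh : Submodule ℝ Q)
    (wu : Vh × Mh) (v : Vh) :
    (sysMap b Vh Mh wu).1 v = ⟪(wu.1 : V), (v : V)⟫ + b (v : V) (wu.2 : Q) := rfl

theorem sysMap_snd {V Q : Type*}
    [NormedAddCommGroup V] [InnerProductSpace ℝ V]
    [NormedAddCommGroup Q] [InnerProductSpace ℝ Q]
    (b : V →ₗ[ℝ] Q →ₗ[ℝ] ℝ) (Vh : Submodule ℝ V) (Mh : Submodule ℝ Q)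
    (wu : Vh × Mh) (q : Mh) :
    (sysMap b Vh Mh wu).2 q = b (wu.1 : V) (q : Q) := rfl

noncomputable def restrictDual {V : Type*}
    [NormedAddCommGroup V] [InnerProductSpace ℝ V]
    (F : V →L[ℝ] ℝ) (Vh : Submodule ℝ V) : Module.Dual ℝ Vh :=
  { toFun := fun v => F (v : V)
    map_add' := by intro x y; simp
    map_smul' := by intro c x; simp }

@[simp] theorem restrictDual_apply {V : Type*}
    [NormedAddCommGroup V] [InnerProductSpace ℝ V]
    (F : V →L[ℝ] ℝ) (Vh : Submodule ℝ V) (v : Vh) :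
    restrictDual F Vh v = F (v : V) := rfl

theorem dualDimAux {V Q : Type*}
    [NormedAddCommGroup V] [InnerProductSpace ℝ V]
    [NormedAddCommGroup Q] [InnerProductSpace ℝ Q]
    (Vh : Submodule ℝ V) (Mh : Submodule ℝ Q)
    [FiniteDimensional ℝ Vh] [FiniteDimensional ℝ Mh] :
    Module.finrank ℝ (Vh × Mh)
      = Module.finrank ℝ (Module.Dual ℝ Vh × Module.Dual ℝ Mh) := by
  rw [Module.finrank_prod, Module.finrank_prod,
    Subspace.dual_finrank_eq, Subspace.dual_finrank_eq]

/-- If the finite-dimensional subspaces `V_h ⊆ V` and `M_h ⊆ Q` satisfy the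
discrete inf-sup condition with constant `m_h > 0`, then for every continuous linear
functional `F` on `V` the discrete saddle point system
`⟪w_h, v_h⟫ + b(v_h, u_h) = F(v_h)` for all `v_h ∈ V_h`, `b(w_h, q_h) = 0` for all
`q_h ∈ M_h`, has a unique solution `(w_h, u_h) ∈ V_h × M_h`. -/
theorem statement2
    {V Q : Type*}
    [NormedAddCommGroup V] [InnerProductSpace ℝ V] [CompleteSpace V]
    [NormedAddCommGroup Q] [InnerProductSpace ℝ Q] [CompleteSpace Q]
    (b : V →ₗ[ℝ] Q →ₗ[ℝ] ℝ)
    (hbdd : ∃ M : ℝ, ∀ (v : V) (u : Q), |b v u| ≤ M * ‖v‖ * ‖u‖)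
    (Vh : Submodule ℝ V) (Mh : Submodule ℝ Q)
    [FiniteDimensional ℝ Vh] [FiniteDimensional ℝ Mh]
    (mh : ℝ) (hmh : 0 < mh)
    (hinfsup : ∀ p : Mh,
      mh * ‖(p : Q)‖ ≤ ⨆ v : {v : Vh // v ≠ 0}, b (v.1 : V) (p : Q) / ‖(v.1 : V)‖)
    (F : V →L[ℝ] ℝ) :
    ∃! wu : Vh × Mh,
      (∀ v : Vh, ⟪(wu.1 : V), (v : V)⟫ + b (v : V) (wu.2 : Q) = F (v : V)) ∧
      (∀ q : Mh, b (wu.1 : V) (q : Q) = 0) := by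
  classical
  have hker : ∀ wu : Vh × Mh, sysMap b Vh Mh wu = 0 → wu = 0 := by
    intro ⟨w, u⟩ h
    have h1 : ∀ v : Vh, ⟪(w : V), (v : V)⟫ + b (v : V) (u : Q) = 0 := by
      intro v
      have := congrArg (fun f => f.1 v) h
      simpa [sysMap_fst] using this
    have h2 : ∀ q : Mh, b (w : V) (q : Q) = 0 := by
      intro q
      have := congrArg (fun f => f.2 q) h
      simpa [sysMap_snd] using this
    have hw : (w : V) = 0 := by
      have := h1 w
      rw [h2 u, add_zero] at this
      exact inner_self_eq_zero.mp this
    have hbu : ∀ v : Vh, b (v : V) (u : Q) = 0 := by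
      intro v
      have := h1 v
      rw [hw] at this
      simpa using this
    have hu : (u : Q) = 0 := by
      have hs : (⨆ v : {v : Vh // v ≠ 0}, b (v.1 : V) (u : Q) / ‖(v.1 : V)‖) = 0 := by
        have : ∀ v : {v : Vh // v ≠ 0}, b (v.1 : V) (u : Q) / ‖(v.1 : V)‖ = 0 := by
          intro v; rw [hbu v.1]; simp
        calc (⨆ v : {v : Vh // v ≠ 0}, b (v.1 : V) (u : Q) / ‖(v.1 : V)‖)
            = ⨆ _ : {v : Vh // v ≠ 0}, (0 : ℝ) := by
              congr 1; ext v; exact this v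
          _ = 0 := Real.iSup_const_zero
      have := hinfsup u
      rw [hs] at this
      have hnn : ‖(u : Q)‖ ≤ 0 := by nlinarith [norm_nonneg (u : Q)]
      exact norm_le_zero_iff.mp hnn
    ext
    · exact hw
    · exact hu
  have hinj : Function.Injective (sysMap b Vh Mh) := by
    intro x y hxy
    have h0 : sysMap b Vh Mh (x - y) = 0 := by rw [map_sub, hxy, sub_self]
    exact sub_eq_zero.mp (hker _ h0)
  have hdim := dualDimAux Vh Mh
  have hsurj : Function.Surjective (sysMap b Vh Mh) :=
    (LinearMap.injective_iff_surjective_of_finrank_eq_finrank hdim).mp hinj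
  obtain ⟨wu, hwu⟩ := hsurj (restrictDual F Vh, 0)
  refine ⟨wu, ?_, ?_⟩
  · constructor
    · intro v
      have := congrArg (fun f => f.1 v) hwu
      simpa [sysMap_fst] using this
    · intro q
      have := congrArg (fun f => f.2 q) hwu
      simpa [sysMap_snd] using this
  · rintro ⟨w', u'⟩ ⟨h1', h2'⟩
    have hL : sysMap b Vh Mh (w', u') = (restrictDual F Vh, 0) := by
      refine Prod.ext ?_ ?_
      · ext v; simpa [sysMap_fst] using h1' v
      · ext q; simpa [sysMap_snd] using h2' q
    exact hinj (hL.trans hwu.symm)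
end

section
/- For every ε > 0 and every x ∈ [0,1], the function s ↦ G(x,s) is nonnegative on [0,1], is monotonically increasing on [0,x] and monotonically decreasing on [x,1]; consequently 0 ≤ G(x,s) ≤ G(x,x) for all s, x ∈ [0,1]. -/
/-- The Green's function of `−ε u'' + u' = f` on `(0,1)` with homogeneous Dirichlet
boundary conditions: `G(x,s) = (e^{1/ε} − e^{x/ε})(1 − e^{−s/ε})/(e^{1/ε} − 1)` for
`s < x`, and `G(x,s) = (e^{x/ε} − 1)(e^{(1−s)/ε} − 1)/(e^{1/ε} − 1)` for `x ≤ s`. -/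
noncomputable def greenG (ε x s : ℝ) : ℝ :=
  if s < x then
    (Real.exp (1 / ε) - Real.exp (x / ε)) * (1 - Real.exp (-s / ε)) /
      (Real.exp (1 / ε) - 1)
  else
    (Real.exp (x / ε) - 1) * (Real.exp ((1 - s) / ε) - 1) / (Real.exp (1 / ε) - 1)

/-- For every `ε > 0` and `x ∈ [0,1]`, the function `s ↦ G(x,s)` is
nonnegative on `[0,1]`, increasing on `[0,x]`, decreasing on `[x,1]`, and consequently
`0 ≤ G(x,s) ≤ G(x,x)` for all `s ∈ [0,1]`. -/
theorem statement5 (ε : ℝ) (hε : 0 < ε) (x : ℝ) (hx : x ∈ Set.Icc (0 : ℝ) 1) :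
    (∀ s ∈ Set.Icc (0 : ℝ) 1, 0 ≤ greenG ε x s) ∧
    MonotoneOn (fun s => greenG ε x s) (Set.Icc 0 x) ∧
    AntitoneOn (fun s => greenG ε x s) (Set.Icc x 1) ∧
    (∀ s ∈ Set.Icc (0 : ℝ) 1, greenG ε x s ≤ greenG ε x x) := by
  obtain ⟨hx0, hx1⟩ := hx
  have hD : (0:ℝ) < Real.exp (1/ε) - 1 := by
    have h0 : (0:ℝ) < 1/ε := by positivity
    have := Real.exp_lt_exp.mpr h0
    rw [Real.exp_zero] at this
    linarith
  have hA : (0:ℝ) ≤ Real.exp (1/ε) - Real.exp (x/ε) := by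
    have : x/ε ≤ 1/ε := (div_le_div_iff_of_pos_right hε).mpr hx1
    have := Real.exp_le_exp.mpr this
    linarith
  have hB : (0:ℝ) ≤ Real.exp (x/ε) - 1 := by
    have h0 : (0:ℝ) ≤ x/ε := by positivity
    have := Real.exp_le_exp.mpr h0
    rw [Real.exp_zero] at this
    linarith
  have hkey : (Real.exp (1/ε) - Real.exp (x/ε)) * (1 - Real.exp (-x/ε)) =
      (Real.exp (x/ε) - 1) * (Real.exp ((1-x)/ε) - 1) := by
    have e1 : Real.exp (x/ε) * Real.exp ((1-x)/ε) = Real.exp (1/ε) := by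
      rw [← Real.exp_add]; ring_nf
    have e2 : Real.exp (x/ε) * Real.exp (-x/ε) = 1 := by
      rw [← Real.exp_add, show x/ε + -x/ε = 0 by ring, Real.exp_zero]
    have e3 : Real.exp (1/ε) * Real.exp (-x/ε) = Real.exp ((1-x)/ε) := by
      rw [← Real.exp_add]; ring_nf
    nlinarith [e1, e2, e3]
  -- monotone numerator facts
  have hmono1 : ∀ a b : ℝ, 0 ≤ a → a ≤ b →
      (Real.exp (1/ε) - Real.exp (x/ε)) * (1 - Real.exp (-a/ε)) ≤
      (Real.exp (1/ε) - Real.exp (x/ε)) * (1 - Real.exp (-b/ε)) := by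
    intro a b ha hab
    have : Real.exp (-b/ε) ≤ Real.exp (-a/ε) := by
      apply Real.exp_le_exp.mpr
      apply div_le_div_of_nonneg_right ?_ hε.le |>.trans_eq rfl
      linarith
    nlinarith
  have hmono2 : ∀ a b : ℝ, a ≤ b →
      (Real.exp (x/ε) - 1) * (Real.exp ((1-b)/ε) - 1) ≤
      (Real.exp (x/ε) - 1) * (Real.exp ((1-a)/ε) - 1) := by
    intro a b hab
    have : Real.exp ((1-b)/ε) ≤ Real.exp ((1-a)/ε) := by
      apply Real.exp_le_exp.mpr
      apply div_le_div_of_nonneg_right ?_ hε.le |>.trans_eq rfl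
      linarith
    nlinarith
  have hnonneg : ∀ s ∈ Set.Icc (0:ℝ) 1, 0 ≤ greenG ε x s := by
    intro s hs
    obtain ⟨hs0, hs1⟩ := hs
    unfold greenG
    split_ifs with h
    · apply div_nonneg _ hD.le
      apply mul_nonneg hA
      have : Real.exp (-s/ε) ≤ 1 := by
        rw [← Real.exp_zero]
        apply Real.exp_le_exp.mpr
        rw [neg_div]
        have : (0:ℝ) ≤ s/ε := by positivity
        linarith
      linarith
    · apply div_nonneg _ hD.le
      apply mul_nonneg hB
      have : (1:ℝ) ≤ Real.exp ((1-s)/ε) := by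
        have h0 : (0:ℝ) ≤ (1-s)/ε := div_nonneg (by linarith) hε.le
        have h1 := Real.exp_le_exp.mpr h0
        rw [Real.exp_zero] at h1
        exact h1
      linarith
  refine ⟨hnonneg, ?_, ?_, ?_⟩
  · intro a ha b hb hab
    simp only
    unfold greenG
    split_ifs with h1 h2 h2
    · exact div_le_div_of_nonneg_right (hmono1 a b ha.1 hab) hD.le
    · have hbx : b = x := le_antisymm hb.2 (not_lt.mp h2)
      rw [hbx, ← hkey]
      exact div_le_div_of_nonneg_right (hmono1 a x ha.1 (le_of_lt h1)) hD.le
    · exact absurd h2 (not_lt.mpr (le_trans (not_lt.mp h1) hab))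
    · have : a = b := le_antisymm hab (by linarith [hb.2, not_lt.mp h1])
      rw [this]
  · intro a ha b hb hab
    simp only
    unfold greenG
    rw [if_neg (not_lt.mpr ha.1), if_neg (not_lt.mpr hb.1)]
    exact div_le_div_of_nonneg_right (hmono2 a b hab) hD.le
  · intro s hs
    unfold greenG
    rw [if_neg (lt_irrefl x)]
    split_ifs with h
    · rw [← hkey]
      exact div_le_div_of_nonneg_right (hmono1 s x hs.1 h.le) hD.le
    · exact div_le_div_of_nonneg_right (hmono2 x s (not_lt.mp h)) hD.le
end

section
/- For every ε > 0 and every x ∈ [0,1], the diagonal value of the Green's function satisfies G(x,x) = (e^{1/ε} − e^{x/ε})(1 − e^{−x/ε})/(e^{1/ε} − 1) ≤ G_∞ := (e^{1/(2ε)} − 1)/(e^{1/(2ε)} + 1), and G_∞ < 1. -/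
/-- For every `ε > 0` and `x ∈ [0,1]`,
`G(x,x) = (e^{1/ε} − e^{x/ε})(1 − e^{−x/ε})/(e^{1/ε} − 1) ≤ G_∞ := (e^{1/(2ε)} − 1)/(e^{1/(2ε)} + 1)`,
and `G_∞ < 1`. -/
theorem statement6 (ε : ℝ) (hε : 0 < ε) (x : ℝ) (hx : x ∈ Set.Icc (0 : ℝ) 1) :
    greenG ε x x =
      (Real.exp (1 / ε) - Real.exp (x / ε)) * (1 - Real.exp (-x / ε)) /
        (Real.exp (1 / ε) - 1) ∧
    greenG ε x x ≤ (Real.exp (1 / (2 * ε)) - 1) / (Real.exp (1 / (2 * ε)) + 1) ∧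
    (Real.exp (1 / (2 * ε)) - 1) / (Real.exp (1 / (2 * ε)) + 1) < 1 := by
  set a := Real.exp (x / ε) with ha
  set b := Real.exp ((1 - x) / ε) with hb
  set c := Real.exp (-x / ε) with hc
  set m := Real.exp (1 / (2 * ε)) with hm
  set E := Real.exp (1 / ε) with hE
  have hεne : ε ≠ 0 := ne_of_gt hε
  have hab : a * b = E := by
    rw [ha, hb, hE, ← Real.exp_add]; congr 1; field_simp; ring
  have hac : a * c = 1 := by
    rw [ha, hc, ← Real.exp_add]
    rw [show x / ε + -x / ε = 0 by ring, Real.exp_zero]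
  have hm2 : m * m = E := by
    rw [hm, hE, ← Real.exp_add]; congr 1; field_simp; norm_num
  have hm1 : 1 < m := by
    have h1 := Real.add_one_le_exp (1/(2*ε))
    have h0 : 0 < 1/(2*ε) := by positivity
    rw [hm]; linarith
  have hE1 : 1 < E := by nlinarith
  have ha1 : 1 ≤ a := Real.one_le_exp (div_nonneg hx.1 hε.le)
  have hb1 : 1 ≤ b := Real.one_le_exp (div_nonneg (by linarith [hx.2]) hε.le)
  have hsum : 2 * m ≤ a + b := by
    nlinarith [sq_nonneg (a - b), sq_nonneg (a + b - 2 * m)]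
  have hG : greenG ε x x = (a - 1) * (b - 1) / (E - 1) := by
    unfold greenG
    rw [if_neg (lt_irrefl x), ha, hb, hE]
  have heq : greenG ε x x = (E - a) * (1 - c) / (E - 1) := by
    rw [hG]
    congr 1
    have : E * c = b := by
      calc E * c = b * (a * c) := by rw [← hab]; ring
        _ = b := by rw [hac]; ring
    nlinarith [this, hac, hab]
  refine ⟨heq, ?_, ?_⟩
  · rw [hG, div_le_div_iff₀ (by linarith) (by linarith)]
    nlinarith [hsum, hab, hm2, hm1, ha1, hb1]
  · rw [div_lt_one (by linarith)]; linarith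
end

section
/- For every ε > 0 and every x ∈ [0,1], ∫₀¹ G(x,s) ds = x − (e^{x/ε} − 1)/(e^{1/ε} − 1). -/
lemma int_exp_neg (ε a b : ℝ) (hε : ε ≠ 0) :
    (∫ s in a..b, Real.exp (-s / ε)) = ε * (Real.exp (-a / ε) - Real.exp (-b / ε)) := by
  have h : ∀ t : ℝ, HasDerivAt (fun t => -ε * Real.exp (-t / ε)) (Real.exp (-t / ε)) t := by
    intro t
    have h1 : HasDerivAt (fun t : ℝ => -t / ε) (-1 / ε) t := by
      simpa [neg_div] using ((hasDerivAt_id t).neg.div_const ε)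
    have h2 := (h1.exp).const_mul (-ε)
    convert h2 using 1
    · rfl
    · rfl
    · field_simp
  have hcont : Continuous fun s : ℝ => Real.exp (-s / ε) := by fun_prop
  rw [intervalIntegral.integral_eq_sub_of_hasDerivAt (fun t _ => h t)
    (hcont.intervalIntegrable a b)]
  ring

/-- For every `ε > 0` and `x ∈ [0,1]`,
`∫₀¹ G(x,s) ds = x − (e^{x/ε} − 1)/(e^{1/ε} − 1)`. -/
theorem statement7 (ε : ℝ) (hε : 0 < ε) (x : ℝ) (hx : x ∈ Set.Icc (0 : ℝ) 1) :
    (∫ s in (0 : ℝ)..1, greenG ε x s) =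
      x - (Real.exp (x / ε) - 1) / (Real.exp (1 / ε) - 1) := by
  obtain ⟨hx0, hx1⟩ := hx
  have hεne : ε ≠ 0 := ne_of_gt hε
  have hcne : (-1 : ℝ) / ε ≠ 0 := by simp [hεne]
  set E := Real.exp (1 / ε) with hE
  set A := Real.exp (x / ε) with hA
  set B := Real.exp (-x / ε) with hB
  have hAB : A * B = 1 := by
    rw [hA, hB, ← Real.exp_add, show x / ε + -x / ε = 0 by ring, Real.exp_zero]
  have hE1 : E - 1 ≠ 0 := by
    have h0 : Real.exp 0 < Real.exp (1 / ε) := Real.exp_lt_exp.mpr (by positivity)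
    rw [Real.exp_zero] at h0
    rw [hE]; linarith
  set f₁ : ℝ → ℝ := fun s => (E - A) * (1 - Real.exp (-s / ε)) / (E - 1) with hf₁
  set f₂ : ℝ → ℝ := fun s => (A - 1) * (Real.exp ((1 - s) / ε) - 1) / (E - 1) with hf₂
  have hce1 : Continuous fun s : ℝ => Real.exp (-s / ε) := by fun_prop
  have hce2 : Continuous fun s : ℝ => Real.exp ((1 - s) / ε) := by fun_prop
  have hc₁ : Continuous f₁ := by rw [hf₁]; fun_prop
  have hc₂ : Continuous f₂ := by rw [hf₂]; fun_prop
  have hxne : ∀ᵐ s : ℝ, s ≠ x := by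
    have h : MeasureTheory.volume ({x} : Set ℝ) = 0 := MeasureTheory.measure_singleton x
    rw [MeasureTheory.ae_iff]
    convert h using 2
    ext s; simp
  have heq1 : ∀ᵐ s : ℝ, s ∈ Set.uIoc (0 : ℝ) x → greenG ε x s = f₁ s := by
    filter_upwards [hxne] with s hs hmem
    rw [Set.uIoc_of_le hx0] at hmem
    have hlt : s < x := lt_of_le_of_ne hmem.2 hs
    simp [greenG, hf₁, hlt, hE, hA, one_div]
  have heq2 : Set.EqOn (greenG ε x) f₂ (Set.uIcc x 1) := by
    intro s hs
    rw [Set.uIcc_of_le hx1] at hs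
    have hnlt : ¬ s < x := not_lt.mpr hs.1
    simp [greenG, hf₂, hnlt, hE, hA, one_div]
  have hres1 : greenG ε x =ᵐ[MeasureTheory.volume.restrict (Set.uIoc (0 : ℝ) x)] f₁ := by
    filter_upwards [MeasureTheory.ae_restrict_of_ae heq1,
      MeasureTheory.ae_restrict_mem measurableSet_uIoc] with s h1 h2 using h1 h2
  have hres2 : greenG ε x =ᵐ[MeasureTheory.volume.restrict (Set.uIoc x (1 : ℝ))] f₂ := by
    filter_upwards [MeasureTheory.ae_restrict_mem measurableSet_uIoc] with s hs using
      heq2 (Set.uIoc_subset_uIcc hs)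
  have hint1 : IntervalIntegrable (greenG ε x) MeasureTheory.volume 0 x := by
    rw [intervalIntegrable_iff]
    have hb := hc₁.intervalIntegrable (μ := MeasureTheory.volume) 0 x
    rw [intervalIntegrable_iff] at hb
    exact hb.congr hres1.symm
  have hint2 : IntervalIntegrable (greenG ε x) MeasureTheory.volume x 1 := by
    rw [intervalIntegrable_iff]
    have hb := hc₂.intervalIntegrable (μ := MeasureTheory.volume) x 1
    rw [intervalIntegrable_iff] at hb
    exact hb.congr hres2.symm
  rw [← intervalIntegral.integral_add_adjacent_intervals hint1 hint2,
    intervalIntegral.integral_congr_ae heq1, intervalIntegral.integral_congr heq2]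
  have J1 : (∫ s in (0 : ℝ)..x, Real.exp (-s / ε)) = ε * (1 - B) := by
    rw [int_exp_neg ε 0 x hεne, show -(0:ℝ) / ε = 0 by ring, Real.exp_zero, ← hB]
  have J2 : (∫ s in x..(1 : ℝ), Real.exp ((1 - s) / ε)) = ε * (E * B - 1) := by
    simp only [show ∀ s : ℝ, (1 - s) / ε = 1 / ε + -s / ε from fun s => by ring,
      Real.exp_add, ← hE]
    rw [intervalIntegral.integral_const_mul, int_exp_neg ε x 1 hεne, ← hB]
    have hEinv : E * Real.exp (-1 / ε) = 1 := by
      rw [hE, ← Real.exp_add, show 1 / ε + -1 / ε = 0 by ring, Real.exp_zero]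
    linear_combination -ε * hEinv
  have I1 : (∫ s in (0 : ℝ)..x, f₁ s) = ((E - A) * (x + ε * B - ε)) / (E - 1) := by
    rw [hf₁]
    simp only [show ∀ s : ℝ, (E - A) * (1 - Real.exp (-s / ε)) / (E - 1)
      = (E - A) / (E - 1) - (E - A) / (E - 1) * Real.exp (-s / ε) from fun s => by ring]
    rw [intervalIntegral.integral_sub (intervalIntegrable_const)
      (show IntervalIntegrable (fun s => (E - A) / (E - 1) * Real.exp (-s / ε)) MeasureTheory.volume 0 x
        from (continuous_const.mul hce1).intervalIntegrable 0 x),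
      intervalIntegral.integral_const_mul, J1, intervalIntegral.integral_const]
    simp only [smul_eq_mul, sub_zero]
    field_simp
    ring
  have I2 : (∫ s in x..(1 : ℝ), f₂ s) = ((A - 1) * (ε * E * B - ε + x - 1)) / (E - 1) := by
    rw [hf₂]
    simp only [show ∀ s : ℝ, (A - 1) * (Real.exp ((1 - s) / ε) - 1) / (E - 1)
      = (A - 1) / (E - 1) * Real.exp ((1 - s) / ε) - (A - 1) / (E - 1) from fun s => by ring]
    rw [intervalIntegral.integral_sub (show IntervalIntegrable (fun s => (A - 1) / (E - 1) * Real.exp ((1 - s) / ε)) MeasureTheory.volume x 1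
        from (continuous_const.mul hce2).intervalIntegrable x 1)
      (intervalIntegrable_const),
      intervalIntegral.integral_const_mul, J2, intervalIntegral.integral_const]
    simp only [smul_eq_mul]
    field_simp
    ring
  rw [I1, I2, ← add_div]
  have key : (E - A) * (x + ε * B - ε) + (A - 1) * (ε * E * B - ε + x - 1)
      = x * (E - 1) - (A - 1) := by
    linear_combination (ε * E - ε) * hAB
  rw [key, sub_div, mul_div_cancel_right₀ _ hE1]
end

section
/- Let ε > 0 and let f : [0,1] → ℝ be continuous with ∫₀¹ f(s) ds = 0. If u is continuously differentiable on [0,1], twice differentiable on (0,1), satisfies −ε u''(x) + u'(x) = f(x) for all x ∈ (0,1) and u(0) = u(1) = 0, then |u'(x)| ≤ ‖f‖_∞ for all x ∈ [0,1], where ‖f‖_∞ = sup_{s∈[0,1]} |f(s)|. -/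
open Set intervalIntegral

private lemma left_bound (ε : ℝ) (hε : 0 < ε) (f : ℝ → ℝ) (M : ℝ)
    (hM : ∀ s ∈ Set.Icc (0:ℝ) 1, |f s| ≤ M)
    (u' u'' : ℝ → ℝ)
    (hu'c : ContinuousOn u' (Set.Icc 0 1))
    (hu'' : ∀ x ∈ Set.Ioo (0 : ℝ) 1, HasDerivAt u' (u'' x) x)
    (hode : ∀ x ∈ Set.Ioo (0 : ℝ) 1, -ε * u'' x + u' x = f x)
    (c : ℝ) (hc : c ∈ Set.Ioo (0:ℝ) 1) (hc0 : u' c = 0) :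
    u' 0 ≤ M := by
  have hM0 : (0:ℝ) ≤ M := le_trans (abs_nonneg _) (hM 0 ⟨le_refl _, zero_le_one⟩)
  by_contra h
  push_neg at h
  -- T : points in [0,c] where u' ≤ M
  set T : Set ℝ := Set.Icc 0 c ∩ u' ⁻¹' Set.Iic M with hT
  have hTc : IsClosed T :=
    (hu'c.mono (Icc_subset_Icc le_rfl hc.2.le)).preimage_isClosed_of_isClosed
      isClosed_Icc isClosed_Iic
  have hTne : T.Nonempty := ⟨c, ⟨hc.1.le, le_rfl⟩, by simp [hc0, hM0]⟩
  have hTbdd : BddBelow T := ⟨0, fun x hx => hx.1.1⟩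
  set b := sInf T with hb
  have hbT : b ∈ T := hTc.csInf_mem hTne hTbdd
  have hb0 : 0 < b := by
    rcases lt_or_ge 0 b with h' | h'
    · exact h'
    · exfalso
      have : b ∈ Set.Icc (0:ℝ) c := hbT.1
      have hb0' : b = 0 := le_antisymm h' this.1
      have : u' 0 ≤ M := by rw [← hb0']; exact hbT.2
      linarith
  have hbc : b ≤ c := hbT.1.2
  have habove : ∀ t ∈ Set.Ico (0:ℝ) b, M < u' t := by
    intro t ht
    by_contra h'
    push_neg at h'
    have : t ∈ T := ⟨⟨ht.1, ht.2.le.trans hbc⟩, h'⟩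
    exact absurd (csInf_le hTbdd this) (not_le.mpr ht.2)
  -- u' is strictly monotone on [0, b]
  have hmono : StrictMonoOn u' (Set.Icc 0 b) := by
    apply strictMonoOn_of_deriv_pos (convex_Icc 0 b)
      (hu'c.mono (Icc_subset_Icc le_rfl (hbc.trans hc.2.le)))
    intro x hx
    rw [interior_Icc] at hx
    have hxI : x ∈ Set.Ioo (0:ℝ) 1 := ⟨hx.1, lt_of_lt_of_le hx.2 (hbc.trans hc.2.le)⟩
    rw [(hu'' x hxI).deriv]
    have hfx : f x ≤ M := le_trans (le_abs_self _) (hM x (Ioo_subset_Icc_self hxI))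
    have hux : M < u' x := habove x ⟨hx.1.le, hx.2⟩
    have := hode x hxI
    nlinarith
  have : u' 0 < u' b := hmono ⟨le_rfl, hb0.le⟩ ⟨hb0.le, le_rfl⟩ hb0
  have : u' b ≤ M := hbT.2
  linarith

private lemma key_bound (ε : ℝ) (hε : 0 < ε) (f : ℝ → ℝ) (M : ℝ)
    (hf : ContinuousOn f (Set.Icc 0 1))
    (hM : ∀ s ∈ Set.Icc (0:ℝ) 1, |f s| ≤ M)
    (hf0 : (∫ s in (0 : ℝ)..1, f s) = 0)
    (u u' u'' : ℝ → ℝ)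
    (hu' : ∀ x ∈ Set.Icc (0 : ℝ) 1, HasDerivWithinAt u (u' x) (Set.Icc 0 1) x)
    (hu'c : ContinuousOn u' (Set.Icc 0 1))
    (hu'' : ∀ x ∈ Set.Ioo (0 : ℝ) 1, HasDerivAt u' (u'' x) x)
    (hode : ∀ x ∈ Set.Ioo (0 : ℝ) 1, -ε * u'' x + u' x = f x)
    (hu0 : u 0 = 0) (hu1 : u 1 = 0) :
    ∀ x ∈ Set.Icc (0 : ℝ) 1, u' x ≤ M := by
  have ucont : ContinuousOn u (Set.Icc 0 1) := fun x hx => (hu' x hx).continuousWithinAt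
  have hderiv : ∀ x ∈ Set.Ioo (0:ℝ) 1, HasDerivAt u (u' x) x := fun x hx =>
    (hu' x (Ioo_subset_Icc_self hx)).hasDerivAt (Icc_mem_nhds hx.1 hx.2)
  -- Rolle
  obtain ⟨c, hc, hc0⟩ := exists_hasDerivAt_eq_zero zero_lt_one ucont (hu0.trans hu1.symm) hderiv
  -- FTC for u
  have hu'int : IntervalIntegrable u' MeasureTheory.volume 0 1 := by
    apply ContinuousOn.intervalIntegrable
    rwa [uIcc_of_le zero_le_one]
  have hintu' : (∫ x in (0:ℝ)..1, u' x) = 0 := by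
    rw [integral_eq_sub_of_hasDerivAt_of_le zero_le_one ucont hderiv hu'int, hu0, hu1, sub_zero]
  -- FTC for u'
  set g : ℝ → ℝ := fun x => (u' x - f x) / ε with hgdef
  have hg : ∀ x ∈ Set.Ioo (0:ℝ) 1, HasDerivAt u' (g x) x := by
    intro x hx
    have h1 := hode x hx
    have : g x = u'' x := by
      simp only [hgdef]
      field_simp
      linarith
    rw [this]
    exact hu'' x hx
  have hgcont : ContinuousOn g (Set.Icc 0 1) := (hu'c.sub hf).div_const ε
  have hgint : IntervalIntegrable g MeasureTheory.volume 0 1 := by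
    apply ContinuousOn.intervalIntegrable
    rwa [uIcc_of_le zero_le_one]
  have hfint : IntervalIntegrable f MeasureTheory.volume 0 1 := by
    apply ContinuousOn.intervalIntegrable
    rwa [uIcc_of_le zero_le_one]
  have hintg : (∫ x in (0:ℝ)..1, g x) = 0 := by
    simp only [hgdef, div_eq_mul_inv]
    rw [integral_mul_const, integral_sub hu'int hfint, hintu', hf0, sub_zero, zero_mul]
  have h01 : u' 1 = u' 0 := by
    have := integral_eq_sub_of_hasDerivAt_of_le zero_le_one hu'c hg hgint
    rw [hintg] at this
    linarith
  have hleft : u' 0 ≤ M := left_bound ε hε f M hM u' u'' hu'c hu'' hode c hc hc0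
  -- max argument
  intro x hx
  obtain ⟨y, hy, hmax⟩ := isCompact_Icc.exists_isMaxOn (Set.nonempty_Icc.mpr zero_le_one) hu'c
  refine le_trans (hmax hx) ?_
  rcases eq_or_lt_of_le hy.1 with h0 | h0
  · rw [← h0]; exact hleft
  rcases eq_or_lt_of_le hy.2 with h1 | h1
  · rw [h1, h01]; exact hleft
  -- interior max
  have hyI : y ∈ Set.Ioo (0:ℝ) 1 := ⟨h0, h1⟩
  have hloc : IsLocalMax u' y := hmax.isLocalMax (Icc_mem_nhds h0 h1)
  have : u'' y = 0 := hloc.hasDerivAt_eq_zero (hu'' y hyI)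
  have := hode y hyI
  have hfy : f y ≤ M := le_trans (le_abs_self _) (hM y (Ioo_subset_Icc_self hyI))
  nlinarith

/-- If `f` is continuous on `[0,1]` with zero average and `u` is a `C¹`
function on `[0,1]`, twice differentiable on `(0,1)`, solving `−ε u'' + u' = f` on
`(0,1)` with `u(0) = u(1) = 0`, then `|u'(x)| ≤ ‖f‖_∞` for all `x ∈ [0,1]`. -/
theorem statement11 (ε : ℝ) (hε : 0 < ε) (f : ℝ → ℝ)
    (hf : ContinuousOn f (Set.Icc 0 1))
    (hf0 : (∫ s in (0 : ℝ)..1, f s) = 0)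
    (u u' u'' : ℝ → ℝ)
    (hu' : ∀ x ∈ Set.Icc (0 : ℝ) 1, HasDerivWithinAt u (u' x) (Set.Icc 0 1) x)
    (hu'c : ContinuousOn u' (Set.Icc 0 1))
    (hu'' : ∀ x ∈ Set.Ioo (0 : ℝ) 1, HasDerivAt u' (u'' x) x)
    (hode : ∀ x ∈ Set.Ioo (0 : ℝ) 1, -ε * u'' x + u' x = f x)
    (hu0 : u 0 = 0) (hu1 : u 1 = 0) :
    ∀ x ∈ Set.Icc (0 : ℝ) 1, |u' x| ≤ ⨆ s : Set.Icc (0 : ℝ) 1, |f (s : ℝ)| := by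
  set M : ℝ := ⨆ s : Set.Icc (0 : ℝ) 1, |f (s : ℝ)| with hMdef
  have hbdd : BddAbove (Set.range fun s : Set.Icc (0:ℝ) 1 => |f (s : ℝ)|) := by
    obtain ⟨C, hC⟩ := isCompact_Icc.exists_bound_of_continuousOn hf
    refine ⟨C, ?_⟩
    rintro z ⟨s, rfl⟩
    simpa using hC s s.2
  have hM : ∀ s ∈ Set.Icc (0:ℝ) 1, |f s| ≤ M := by
    intro s hs
    exact le_ciSup hbdd (⟨s, hs⟩ : Set.Icc (0:ℝ) 1)
  have hupper := key_bound ε hε f M hf hM hf0 u u' u'' hu' hu'c hu'' hode hu0 hu1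
  have hlower := key_bound ε hε (fun x => -f x) M (hf.neg)
    (fun s hs => by simpa using hM s hs)
    (by rw [intervalIntegral.integral_neg, hf0, neg_zero])
    (fun x => -u x) (fun x => -u' x) (fun x => -u'' x)
    (fun x hx => (hu' x hx).neg) (hu'c.neg)
    (fun x hx => (hu'' x hx).neg)
    (fun x hx => by have := hode x hx; ring_nf; linarith)
    (by simp [hu0]) (by simp [hu1])
  intro x hx
  rw [abs_le]
  constructor
  · have := hlower x hx; simpa using neg_le.mp (by simpa using this)
  · exact hupper x hx
end

section
/- Let ε > 0 and let f : [0,1] → ℝ be continuous with ∫₀¹ f(s) ds = 0. If u is continuously differentiable on [0,1], twice differentiable on (0,1), satisfies −ε u''(x) + u'(x) = f(x) for all x ∈ (0,1) and u(0) = u(1) = 0, then |u''(x)| ≤ (2/ε) ‖f‖_∞ for all x ∈ (0,1), where ‖f‖_∞ = sup_{s∈[0,1]} |f(s)|. -/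
open Set

lemma aux_le (ε M : ℝ) (hε : 0 < ε) (f v v' : ℝ → ℝ)
    (hv : ContinuousOn v (Set.Icc 0 1))
    (hv' : ∀ x ∈ Set.Ioo (0:ℝ) 1, HasDerivAt v (v' x) x)
    (hode : ∀ x ∈ Set.Ioo (0:ℝ) 1, ε * v' x = v x - f x)
    (hM : ∀ x ∈ Set.Icc (0:ℝ) 1, f x ≤ M)
    (hvv : v 0 = v 1) :
    ∀ x ∈ Set.Icc (0:ℝ) 1, v x ≤ M := by
  set p : ℝ → ℝ := fun x => Real.exp (-x / ε) * (v x - M) with hp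
  have hpd : ∀ x ∈ Set.Ioo (0:ℝ) 1,
      HasDerivAt p (Real.exp (-x / ε) * (M - f x) / ε) x := by
    intro x hx
    have h1 : HasDerivAt (fun x : ℝ => Real.exp (-x / ε)) (Real.exp (-x / ε) * (-1 / ε)) x := by
      have : HasDerivAt (fun x : ℝ => -x / ε) (-1 / ε) x := by
        simpa using ((hasDerivAt_id x).neg.div_const ε)
      exact (Real.hasDerivAt_exp _).comp x this
    have h2 : HasDerivAt (fun x => v x - M) (v' x) x := (hv' x hx).sub_const M
    have := h1.mul h2
    refine this.congr_deriv ?_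
    have hod := hode x hx
    have : v' x = (v x - f x) / ε := by field_simp at hod ⊢; linarith
    rw [this]
    field_simp
    ring
  have hmono : MonotoneOn p (Set.Icc 0 1) := by
    apply monotoneOn_of_hasDerivWithinAt_nonneg (convex_Icc (0:ℝ) 1)
    · exact ((Real.continuous_exp.comp (by continuity)).continuousOn).mul (hv.sub continuousOn_const)
    · intro x hx
      rw [interior_Icc] at hx
      exact (hpd x hx).hasDerivWithinAt
    · intro x hx
      rw [interior_Icc] at hx
      have : f x ≤ M := hM x (Set.mem_Icc.2 ⟨hx.1.le, hx.2.le⟩)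
      exact div_nonneg (mul_nonneg (Real.exp_pos _).le (by linarith)) hε.le
  -- p 0 ≤ p 1 gives v 0 ≤ M
  have h01 : p 0 ≤ p 1 := hmono (Set.left_mem_Icc.2 zero_le_one) (Set.right_mem_Icc.2 zero_le_one) zero_le_one
  have hc : v 0 - M ≤ 0 := by
    have hp0 : p 0 = v 0 - M := by simp [hp]
    have hp1 : p 1 = Real.exp (-1 / ε) * (v 0 - M) := by simp [hp, hvv]
    rw [hp0, hp1] at h01
    by_contra h
    push_neg at h
    have he : Real.exp (-1 / ε) < 1 := by
      rw [Real.exp_lt_one_iff]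
      exact div_neg_of_neg_of_pos (by norm_num) hε
    nlinarith
  intro x hx
  have := hmono hx (Set.right_mem_Icc.2 zero_le_one) hx.2
  have hp1 : p 1 = Real.exp (-1 / ε) * (v 0 - M) := by simp [hp, hvv]
  have hpx : p x = Real.exp (-x / ε) * (v x - M) := rfl
  have hpos : 0 < Real.exp (-x / ε) := Real.exp_pos _
  have h1 : p 1 ≤ 0 := by rw [hp1]; exact mul_nonpos_of_nonneg_of_nonpos (Real.exp_pos _).le hc
  nlinarith [this, hpos]

/-- If `f` is continuous on `[0,1]` with zero average and `u` is a `C¹`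
function on `[0,1]`, twice differentiable on `(0,1)`, solving `−ε u'' + u' = f` on
`(0,1)` with `u(0) = u(1) = 0`, then `|u''(x)| ≤ (2/ε) ‖f‖_∞` for all `x ∈ (0,1)`. -/
theorem statement12 (ε : ℝ) (hε : 0 < ε) (f : ℝ → ℝ)
    (hf : ContinuousOn f (Set.Icc 0 1))
    (hf0 : (∫ s in (0 : ℝ)..1, f s) = 0)
    (u u' u'' : ℝ → ℝ)
    (hu' : ∀ x ∈ Set.Icc (0 : ℝ) 1, HasDerivWithinAt u (u' x) (Set.Icc 0 1) x)
    (hu'c : ContinuousOn u' (Set.Icc 0 1))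
    (hu'' : ∀ x ∈ Set.Ioo (0 : ℝ) 1, HasDerivAt u' (u'' x) x)
    (hode : ∀ x ∈ Set.Ioo (0 : ℝ) 1, -ε * u'' x + u' x = f x)
    (hu0 : u 0 = 0) (hu1 : u 1 = 0) :
    ∀ x ∈ Set.Ioo (0 : ℝ) 1,
      |u'' x| ≤ (2 / ε) * ⨆ s : Set.Icc (0 : ℝ) 1, |f (s : ℝ)| := by
  set M : ℝ := ⨆ s : Set.Icc (0 : ℝ) 1, |f (s : ℝ)| with hMdef
  -- |f| ≤ M on [0,1]
  have hbdd : BddAbove (Set.range fun s : Set.Icc (0:ℝ) 1 => |f (s:ℝ)|) := by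
    have hr : (Set.range fun s : Set.Icc (0:ℝ) 1 => |f (s:ℝ)|)
        = (fun x => |f x|) '' Set.Icc 0 1 := by
      ext y
      constructor
      · rintro ⟨⟨s, hs⟩, rfl⟩; exact ⟨s, hs, rfl⟩
      · rintro ⟨s, hs, rfl⟩; exact ⟨⟨s, hs⟩, rfl⟩
    rw [hr]
    exact (isCompact_Icc.image_of_continuousOn hf.abs).bddAbove
  have hM : ∀ x ∈ Set.Icc (0:ℝ) 1, |f x| ≤ M := fun x hx => le_ciSup hbdd ⟨x, hx⟩
  -- integrability facts
  have hu'int : IntervalIntegrable u' MeasureTheory.volume 0 1 := by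
    apply ContinuousOn.intervalIntegrable
    rwa [Set.uIcc_of_le zero_le_one]
  have hfint : IntervalIntegrable f MeasureTheory.volume 0 1 := by
    apply ContinuousOn.intervalIntegrable
    rwa [Set.uIcc_of_le zero_le_one]
  -- ∫ u' = u 1 - u 0 = 0
  have hucont : ContinuousOn u (Set.Icc 0 1) := fun x hx => (hu' x hx).continuousWithinAt
  have hiu' : (∫ s in (0:ℝ)..1, u' s) = 0 := by
    have := intervalIntegral.integral_eq_sub_of_hasDeriv_right_of_le zero_le_one hucont
      (fun x hx => (((hu' x (Set.Ioo_subset_Icc_self hx)).hasDerivAt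
        (Icc_mem_nhds hx.1 hx.2)).hasDerivWithinAt)) hu'int
    rw [this, hu0, hu1]; ring
  -- ∫ g = u' 1 - u' 0 where g = (u' - f)/ε
  have hgder : ∀ x ∈ Set.Ioo (0:ℝ) 1,
      HasDerivWithinAt u' ((u' x - f x) / ε) (Set.Ioi x) x := by
    intro x hx
    have hod := hode x hx
    have : u'' x = (u' x - f x) / ε := by field_simp; linarith
    exact (this ▸ (hu'' x hx)).hasDerivWithinAt
  have hgc : ContinuousOn (fun x => (u' x - f x) / ε) (Set.Icc 0 1) :=
    (hu'c.sub hf).div_const ε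
  have hgint : IntervalIntegrable (fun x => (u' x - f x) / ε) MeasureTheory.volume 0 1 := by
    apply ContinuousOn.intervalIntegrable
    rwa [Set.uIcc_of_le zero_le_one]
  have hig : u' 1 - u' 0 =
      ∫ s in (0:ℝ)..1, (u' s - f s) / ε :=
    (intervalIntegral.integral_eq_sub_of_hasDeriv_right_of_le zero_le_one hu'c hgder hgint).symm
  have hvv : u' 0 = u' 1 := by
    have : (∫ s in (0:ℝ)..1, (u' s - f s) / ε)
        = ((∫ s in (0:ℝ)..1, u' s) - ∫ s in (0:ℝ)..1, f s) / ε := by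
      rw [intervalIntegral.integral_div, intervalIntegral.integral_sub hu'int hfint]
    rw [this, hiu', hf0] at hig
    simp at hig
    linarith
  -- apply the monotonicity lemma twice
  have hub := aux_le ε M hε f u' u'' hu'c hu''
    (fun x hx => by have := hode x hx; linarith)
    (fun x hx => (abs_le.1 (hM x hx)).2) hvv
  have hlb := aux_le ε M hε (fun x => -f x) (fun x => -u' x) (fun x => -u'' x)
    hu'c.neg (fun x hx => (hu'' x hx).neg)
    (fun x hx => by have := hode x hx; simp; linarith)
    (fun x hx => by have := (abs_le.1 (hM x hx)).1; simp; linarith)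
    (by simp [hvv])
  intro x hx
  have hxI : x ∈ Set.Icc (0:ℝ) 1 := Set.Ioo_subset_Icc_self hx
  have h1 : u' x ≤ M := hub x hxI
  have h2 : -u' x ≤ M := hlb x hxI
  have h3 := abs_le.1 (hM x hxI)
  have heq : u'' x = (u' x - f x) / ε := by
    have := hode x hx; field_simp; linarith
  rw [heq, abs_div, abs_of_pos hε, div_le_iff₀ hε]
  have h4 : 2 / ε * M * ε = 2 * M := by field_simp
  rw [h4, abs_le]
  constructor <;> linarith
end

section
/- Let a < b with h = b − a, let u : [a,b] → ℝ be differentiable with |u'(x)| ≤ M for all x ∈ [a,b], and let ℓ : [a,b] → ℝ be the affine function with ℓ(a) = u(a) and ℓ(b) = u(b). Then ∫_a^b (u(x) − ℓ(x))² dx ≤ (h³/2) M². -/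
/-- If `u` is differentiable on `[a,b]` with `|u'| ≤ M` and `ℓ` is the
affine interpolant of `u` at the endpoints `a`, `b`, then with `h = b − a`,
`∫_a^b (u − ℓ)² ≤ (h³/2) M²`. -/
theorem statement14 (a b : ℝ) (hab : a < b) (h : ℝ) (hh : h = b - a)
    (u u' : ℝ → ℝ) (M : ℝ)
    (hu : ∀ x ∈ Set.Icc a b, HasDerivWithinAt u (u' x) (Set.Icc a b) x)
    (hM : ∀ x ∈ Set.Icc a b, |u' x| ≤ M)
    (l : ℝ → ℝ) (hl : ∃ c d : ℝ, ∀ x, l x = c * x + d)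
    (hla : l a = u a) (hlb : l b = u b) :
    (∫ x in a..b, (u x - l x) ^ 2) ≤ h ^ 3 / 2 * M ^ 2 := by
  obtain ⟨c, d, hcd⟩ := hl
  have hba : (0:ℝ) < b - a := sub_pos.mpr hab
  have haIcc : a ∈ Set.Icc a b := ⟨le_refl a, hab.le⟩
  have hbIcc : b ∈ Set.Icc a b := ⟨hab.le, le_refl b⟩
  have hM0 : 0 ≤ M := le_trans (abs_nonneg _) (hM a haIcc)
  set g : ℝ → ℝ := fun x => u x - l x with hgdef
  have hl' : ∀ x ∈ Set.Icc a b, HasDerivWithinAt l c (Set.Icc a b) x := by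
    intro x hx
    have hleq : l = fun x => c * x + d := funext hcd
    rw [hleq]
    exact (((hasDerivAt_id x).const_mul c).add_const d).hasDerivWithinAt.congr_deriv (by simp)
  have hg' : ∀ x ∈ Set.Icc a b, HasDerivWithinAt g (u' x - c) (Set.Icc a b) x :=
    fun x hx => (hu x hx).sub (hl' x hx)
  -- |c| ≤ M
  have hcM : |c| ≤ M := by
    have hub : ‖u b - u a‖ ≤ M * ‖b - a‖ :=
      Convex.norm_image_sub_le_of_norm_hasDerivWithin_le hu
        (fun z hz => by simpa using hM z hz) (convex_Icc a b) haIcc hbIcc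
    have hcval : c * (b - a) = u b - u a := by
      have h1 := hcd a; have h2 := hcd b
      have : l b - l a = u b - u a := by rw [hla, hlb]
      rw [h1, h2] at this; ring_nf; ring_nf at this; linarith
    have : |c| * (b - a) ≤ M * (b - a) := by
      have := hub
      rw [← hcval] at this
      simpa [abs_mul, abs_of_pos hba, Real.norm_eq_abs] using this
    exact le_of_mul_le_mul_right this hba
  have hglip : ∀ x ∈ Set.Icc a b, ∀ y ∈ Set.Icc a b, |g y - g x| ≤ 2 * M * |y - x| :=
    fun x hx y hy =>
      Convex.norm_image_sub_le_of_norm_hasDerivWithin_le hg'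
        (fun z hz => by
          have := hM z hz
          have := hcM
          simp only [Real.norm_eq_abs]
          calc |u' z - c| ≤ |u' z| + |c| := abs_sub _ _
            _ ≤ 2 * M := by linarith)
        (convex_Icc a b) hx hy
  have hga : g a = 0 := by simp [hgdef, hla]
  have hgb : g b = 0 := by simp [hgdef, hlb]
  set m : ℝ := (a + b) / 2 with hm
  have ham : a ≤ m := by simp [hm]; linarith
  have hmb : m ≤ b := by simp [hm]; linarith
  -- pointwise bounds
  have hbd1 : ∀ x ∈ Set.Icc a m, (g x) ^ 2 ≤ (2*M)^2 * (x - a)^2 := by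
    intro x hx
    have hxab : x ∈ Set.Icc a b := ⟨hx.1, hx.2.trans hmb⟩
    have := hglip a haIcc x hxab
    rw [hga, sub_zero] at this
    have h2 : (g x)^2 = |g x|^2 := (sq_abs _).symm
    rw [h2]
    calc |g x|^2 ≤ (2*M*|x-a|)^2 := by
          apply pow_le_pow_left₀ (abs_nonneg _) this
      _ = (2*M)^2 * (x-a)^2 := by rw [mul_pow, sq_abs]
  have hbd2 : ∀ x ∈ Set.Icc m b, (g x) ^ 2 ≤ (2*M)^2 * (b - x)^2 := by
    intro x hx
    have hxab : x ∈ Set.Icc a b := ⟨ham.trans hx.1, hx.2⟩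
    have := hglip b hbIcc x hxab
    rw [hgb, sub_zero] at this
    have h2 : (g x)^2 = |g x|^2 := (sq_abs _).symm
    rw [h2]
    calc |g x|^2 ≤ (2*M*|x-b|)^2 := by
          apply pow_le_pow_left₀ (abs_nonneg _) this
      _ = (2*M)^2 * (b-x)^2 := by rw [mul_pow, sq_abs, ← neg_sub b x, neg_pow]; ring
  -- continuity and integrability
  have hgc : ContinuousOn g (Set.Icc a b) := fun x hx => (hg' x hx).continuousWithinAt
  have hg2c : ContinuousOn (fun x => (g x)^2) (Set.Icc a b) := hgc.pow 2
  have hint1 : IntervalIntegrable (fun x => (g x)^2) MeasureTheory.volume a m :=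
    (hg2c.mono (Set.Icc_subset_Icc le_rfl hmb)).intervalIntegrable_of_Icc ham
  have hint2 : IntervalIntegrable (fun x => (g x)^2) MeasureTheory.volume m b :=
    (hg2c.mono (Set.Icc_subset_Icc ham le_rfl)).intervalIntegrable_of_Icc hmb
  have hip1 : IntervalIntegrable (fun x => (2*M)^2 * (x - a)^2) MeasureTheory.volume a m :=
    ((continuous_const.mul ((continuous_id.sub continuous_const).pow 2)).intervalIntegrable a m)
  have hip2 : IntervalIntegrable (fun x => (2*M)^2 * (b - x)^2) MeasureTheory.volume m b :=
    ((continuous_const.mul ((continuous_const.sub continuous_id).pow 2)).intervalIntegrable m b)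
  -- split integral
  have hsplit : (∫ x in a..b, (g x)^2)
      = (∫ x in a..m, (g x)^2) + (∫ x in m..b, (g x)^2) :=
    (intervalIntegral.integral_add_adjacent_intervals hint1 hint2).symm
  have hI1 : (∫ x in a..m, (g x)^2) ≤ (2*M)^2 * ((m - a)^3 / 3) := by
    have := intervalIntegral.integral_mono_on ham hint1 hip1 hbd1
    calc (∫ x in a..m, (g x)^2) ≤ ∫ x in a..m, (2*M)^2 * (x - a)^2 := this
      _ = (2*M)^2 * ∫ x in a..m, (x - a)^2 := intervalIntegral.integral_const_mul _ _
      _ = (2*M)^2 * ((m - a)^3 / 3) := by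
          congr 1
          have := intervalIntegral.integral_comp_sub_right (a := a) (b := m)
            (fun x => x^2) a
          rw [this]
          simp [integral_pow]
          norm_num
  have hI2 : (∫ x in m..b, (g x)^2) ≤ (2*M)^2 * ((b - m)^3 / 3) := by
    have := intervalIntegral.integral_mono_on hmb hint2 hip2 hbd2
    calc (∫ x in m..b, (g x)^2) ≤ ∫ x in m..b, (2*M)^2 * (b - x)^2 := this
      _ = (2*M)^2 * ∫ x in m..b, (b - x)^2 := intervalIntegral.integral_const_mul _ _
      _ = (2*M)^2 * ((b - m)^3 / 3) := by
          congr 1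
          have h1 : (∫ x in m..b, (b - x)^2) = ∫ x in m..b, (x - b)^2 := by
            congr 1; funext x; ring
          rw [h1]
          have := intervalIntegral.integral_comp_sub_right (a := m) (b := b)
            (fun x => x^2) b
          rw [this]
          have : (∫ x in (m-b)..(b-b), x^2) = ((b-b)^3 - (m-b)^3)/3 := by
            simp [integral_pow]; norm_num
          rw [this]; ring
  have hma : m - a = h / 2 := by rw [hm, hh]; ring
  have hbm : b - m = h / 2 := by rw [hm, hh]; ring
  have hgoal : (∫ x in a..b, (g x)^2) ≤ h^3 / 2 * M^2 := by
    rw [hsplit]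
    have hh0 : 0 < h := by rw [hh]; exact hba
    calc (∫ x in a..m, (g x)^2) + (∫ x in m..b, (g x)^2)
        ≤ (2*M)^2 * ((m - a)^3/3) + (2*M)^2 * ((b - m)^3/3) := add_le_add hI1 hI2
      _ = h^3 / 3 * M^2 := by rw [hma, hbm]; ring
      _ ≤ h^3 / 2 * M^2 := by nlinarith [sq_nonneg M, pow_pos hh0 3]
  simpa [hgdef] using hgoal
end

section
/- Let n ≥ 1, set h = 1/n and x_i = i·h for i = 0,…,n. Let u : [0,1] → ℝ be differentiable with |u'(x)| ≤ M for all x ∈ [0,1], and let u_I : [0,1] → ℝ be the piecewise linear interpolant of u: u_I(x_i) = u(x_i) for all i and u_I is affine on each subinterval [x_{i−1}, x_i]. Then ∫₀¹ (u(x) − u_I(x))² dx ≤ (h²/2) M². -/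
open Set MeasureTheory

/-- One-sided bound: if `|f x| ≤ 2M(x-a)` on `[a,m]` then `∫ f² ≤ 4M²(m-a)³/3`. -/
lemma aux_half_left (a m M : ℝ) (ham : a ≤ m) (f : ℝ → ℝ)
    (hf : ContinuousOn f (Icc a m))
    (hbound : ∀ x ∈ Icc a m, |f x| ≤ 2 * M * (x - a)) :
    (∫ x in a..m, f x ^ 2) ≤ 4 * M ^ 2 * (m - a) ^ 3 / 3 := by
  have hint1 : IntervalIntegrable (fun x => f x ^ 2) volume a m := by
    apply ContinuousOn.intervalIntegrable
    rw [uIcc_of_le ham]; exact hf.pow 2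
  have hint2 : IntervalIntegrable (fun x => (2 * M * (x - a)) ^ 2) volume a m :=
    (Continuous.pow (by continuity) 2).intervalIntegrable a m
  have h1 : (∫ x in a..m, f x ^ 2) ≤ ∫ x in a..m, (2 * M * (x - a)) ^ 2 := by
    apply intervalIntegral.integral_mono_on ham hint1 hint2
    intro x hx
    calc f x ^ 2 = |f x| ^ 2 := (sq_abs _).symm
      _ ≤ (2 * M * (x - a)) ^ 2 :=
        pow_le_pow_left₀ (abs_nonneg _) (hbound x hx) 2
  have h2 : (∫ x in a..m, (2 * M * (x - a)) ^ 2) = 4 * M ^ 2 * (m - a) ^ 3 / 3 := by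
    have : (∫ x in a..m, (2 * M * (x - a)) ^ 2)
        = ∫ x in a..m, 4 * M ^ 2 * ((x - a) ^ 2) := by
      congr 1; funext x; ring
    rw [this, intervalIntegral.integral_const_mul]
    have h3 : (∫ x in a..m, (x - a) ^ 2) = ∫ x in a - a..m - a, x ^ 2 :=
      intervalIntegral.integral_comp_sub_right (fun x => x ^ 2) a
    rw [h3, integral_pow]
    ring
  linarith

lemma aux_half_right (m b M : ℝ) (hmb : m ≤ b) (f : ℝ → ℝ)
    (hf : ContinuousOn f (Icc m b))
    (hbound : ∀ x ∈ Icc m b, |f x| ≤ 2 * M * (b - x)) :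
    (∫ x in m..b, f x ^ 2) ≤ 4 * M ^ 2 * (b - m) ^ 3 / 3 := by
  have hint1 : IntervalIntegrable (fun x => f x ^ 2) volume m b := by
    apply ContinuousOn.intervalIntegrable
    rw [uIcc_of_le hmb]; exact hf.pow 2
  have hint2 : IntervalIntegrable (fun x => (2 * M * (b - x)) ^ 2) volume m b :=
    (Continuous.pow (by continuity) 2).intervalIntegrable m b
  have h1 : (∫ x in m..b, f x ^ 2) ≤ ∫ x in m..b, (2 * M * (b - x)) ^ 2 := by
    apply intervalIntegral.integral_mono_on hmb hint1 hint2
    intro x hx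
    calc f x ^ 2 = |f x| ^ 2 := (sq_abs _).symm
      _ ≤ (2 * M * (b - x)) ^ 2 :=
        pow_le_pow_left₀ (abs_nonneg _) (hbound x hx) 2
  have h2 : (∫ x in m..b, (2 * M * (b - x)) ^ 2) = 4 * M ^ 2 * (b - m) ^ 3 / 3 := by
    have : (∫ x in m..b, (2 * M * (b - x)) ^ 2)
        = ∫ x in m..b, 4 * M ^ 2 * ((b - x) ^ 2) := by
      congr 1; funext x; ring
    rw [this, intervalIntegral.integral_const_mul]
    have h3 : (∫ x in m..b, (b - x) ^ 2) = ∫ x in b - b..b - m, x ^ 2 :=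
      intervalIntegral.integral_comp_sub_left (fun x => x ^ 2) b
    rw [h3, integral_pow]
    ring
  linarith

/-- Key lemma: a `2M`-Lipschitz function vanishing at both endpoints of `[a,b]`
has `∫ f² ≤ M²(b-a)³/3`. -/
lemma aux_key (a b M : ℝ) (hab : a ≤ b) (f : ℝ → ℝ)
    (hf : ContinuousOn f (Icc a b)) (hfa : f a = 0) (hfb : f b = 0)
    (hlip : ∀ x ∈ Icc a b, ∀ y ∈ Icc a b, |f x - f y| ≤ 2 * M * |x - y|) :
    (∫ x in a..b, f x ^ 2) ≤ M ^ 2 * (b - a) ^ 3 / 3 := by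
  set m := (a + b) / 2 with hm
  have ham : a ≤ m := by simp [hm]; linarith
  have hmb : m ≤ b := by simp [hm]; linarith
  have hsub1 : Icc a m ⊆ Icc a b := Icc_subset_Icc le_rfl hmb
  have hsub2 : Icc m b ⊆ Icc a b := Icc_subset_Icc ham le_rfl
  have ha : a ∈ Icc a b := ⟨le_rfl, hab⟩
  have hb : b ∈ Icc a b := ⟨hab, le_rfl⟩
  have hsplit : (∫ x in a..b, f x ^ 2)
      = (∫ x in a..m, f x ^ 2) + ∫ x in m..b, f x ^ 2 := by
    symm
    apply intervalIntegral.integral_add_adjacent_intervals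
    · apply ContinuousOn.intervalIntegrable
      rw [uIcc_of_le ham]; exact (hf.mono hsub1).pow 2
    · apply ContinuousOn.intervalIntegrable
      rw [uIcc_of_le hmb]; exact (hf.mono hsub2).pow 2
  have hL : (∫ x in a..m, f x ^ 2) ≤ 4 * M ^ 2 * (m - a) ^ 3 / 3 := by
    apply aux_half_left a m M ham f (hf.mono hsub1)
    intro x hx
    have := hlip x (hsub1 hx) a ha
    rw [hfa, sub_zero] at this
    rwa [abs_of_nonneg (by linarith [hx.1] : (0:ℝ) ≤ x - a)] at this
  have hR : (∫ x in m..b, f x ^ 2) ≤ 4 * M ^ 2 * (b - m) ^ 3 / 3 := by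
    apply aux_half_right m b M hmb f (hf.mono hsub2)
    intro x hx
    have := hlip x (hsub2 hx) b hb
    rw [hfb, sub_zero] at this
    rwa [abs_of_nonpos (by linarith [hx.2] : x - b ≤ 0), neg_sub] at this
  have hma : m - a = (b - a) / 2 := by rw [hm]; ring
  have hbm : b - m = (b - a) / 2 := by rw [hm]; ring
  rw [hsplit]
  rw [hma] at hL; rw [hbm] at hR
  nlinarith [hL, hR]

/-- If `u` is differentiable on `[0,1]` with `|u'| ≤ M` and `u_I` is its
piecewise linear interpolant on the uniform mesh `x_i = i·h`, `h = 1/n`, then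
`∫₀¹ (u − u_I)² ≤ (h²/2) M²`. -/
theorem statement15 (n : ℕ) (hn : 1 ≤ n) (h : ℝ) (hh : h = 1 / n)
    (u u' : ℝ → ℝ) (M : ℝ)
    (hu : ∀ x ∈ Set.Icc (0 : ℝ) 1, HasDerivWithinAt u (u' x) (Set.Icc 0 1) x)
    (hM : ∀ x ∈ Set.Icc (0 : ℝ) 1, |u' x| ≤ M)
    (uI : ℝ → ℝ)
    (hnode : ∀ i : ℕ, i ≤ n → uI ((i : ℝ) * h) = u ((i : ℝ) * h))
    (haff : ∀ i : ℕ, 1 ≤ i → i ≤ n → ∃ c d : ℝ,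
      ∀ x ∈ Set.Icc (((i : ℝ) - 1) * h) ((i : ℝ) * h), uI x = c * x + d) :
    (∫ x in (0 : ℝ)..1, (u x - uI x) ^ 2) ≤ h ^ 2 / 2 * M ^ 2 := by
  have hn0 : (0:ℝ) < n := by exact_mod_cast hn
  have hhpos : 0 < h := by rw [hh]; positivity
  have hnh : (n:ℝ) * h = 1 := by rw [hh]; field_simp
  have hM0 : 0 ≤ M := le_trans (abs_nonneg _) (hM 0 ⟨le_rfl, one_pos.le⟩)
  -- Lipschitz property of u on [0,1]
  have hulip : ∀ x ∈ Icc (0:ℝ) 1, ∀ y ∈ Icc (0:ℝ) 1, |u x - u y| ≤ M * |x - y| := by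
    intro x hx y hy
    have := Convex.norm_image_sub_le_of_norm_hasDerivWithin_le hu
      (fun z hz => by simpa using hM z hz) (convex_Icc 0 1) hy hx
    simpa [Real.norm_eq_abs] using this
  -- continuity of u on [0,1]
  have hucont : ContinuousOn u (Icc (0:ℝ) 1) :=
    fun x hx => (hu x hx).continuousWithinAt
  -- mesh
  set a : ℕ → ℝ := fun k => (k : ℝ) * h with hadef
  have ha0 : a 0 = 0 := by simp [hadef]
  have han : a n = 1 := by simp [hadef, hnh]
  have hmono : ∀ k, a k ≤ a (k + 1) := by
    intro k
    simp only [hadef]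
    push_cast
    nlinarith [hhpos.le]
  -- subinterval inclusion in [0,1]
  have hsub : ∀ k, k < n → Icc (a k) (a (k + 1)) ⊆ Icc (0:ℝ) 1 := by
    intro k hk
    apply Icc_subset_Icc
    · simp only [hadef]; positivity
    · simp only [hadef]
      rw [← hnh]
      have : ((k:ℝ) + 1) ≤ n := by exact_mod_cast hk
      push_cast
      nlinarith [hhpos.le]
  -- per-interval data
  have key : ∀ k, k < n →
      (IntervalIntegrable (fun x => (u x - uI x) ^ 2) volume (a k) (a (k + 1))) ∧
      (∫ x in a k..a (k + 1), (u x - uI x) ^ 2) ≤ M ^ 2 * h ^ 3 / 3 := by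
    intro k hk
    obtain ⟨c, d, hcd⟩ := haff (k + 1) (Nat.le_add_left 1 k) hk
    have hcd' : ∀ x ∈ Icc (a k) (a (k + 1)), uI x = c * x + d := by
      intro x hx
      apply hcd
      have e1 : ((((k:ℕ)+1 : ℕ)):ℝ) - 1 = (k:ℝ) := by push_cast; ring
      have e2 : ((((k:ℕ)+1 : ℕ)):ℝ) = (k:ℝ) + 1 := by push_cast; ring
      rw [e1, e2]
      exact ⟨hx.1, by simpa [hadef] using hx.2⟩
    set f : ℝ → ℝ := fun x => u x - (c * x + d) with hfdef
    have hfc : ContinuousOn f (Icc (a k) (a (k + 1))) :=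
      (hucont.mono (hsub k hk)).sub (Continuous.continuousOn (by fun_prop))
    have hmemk : a k ∈ Icc (a k) (a (k + 1)) := ⟨le_rfl, hmono k⟩
    have hmemk1 : a (k + 1) ∈ Icc (a k) (a (k + 1)) := ⟨hmono k, le_rfl⟩
    have hfa : f (a k) = 0 := by
      have h1 := hcd' _ hmemk
      have h2 := hnode k (le_of_lt hk)
      simp only [hfdef, hadef] at *
      rw [← h1, h2]; ring
    have hfb : f (a (k + 1)) = 0 := by
      have h1 := hcd' _ hmemk1
      have h2 := hnode (k + 1) hk
      simp only [hfdef, hadef] at *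
      push_cast at *
      rw [← h1, h2]; ring
    -- slope bound
    have hc : |c| ≤ M := by
      have e1 : c * h = u (a (k+1)) - u (a k) := by
        have g1 := hcd' _ hmemk
        have g2 := hcd' _ hmemk1
        have n1 := hnode k (le_of_lt hk)
        have n2 := hnode (k + 1) hk
        simp only [hadef] at *
        push_cast at *
        nlinarith [g1, g2, n1, n2]
      have e2 : |u (a (k+1)) - u (a k)| ≤ M * h := by
        have := hulip _ (hsub k hk hmemk1) _ (hsub k hk hmemk)
        have hd : a (k + 1) - a k = h := by simp only [hadef]; push_cast; ring
        rwa [hd, abs_of_pos hhpos] at this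
      rw [← e1, abs_mul, abs_of_pos hhpos] at e2
      exact le_of_mul_le_mul_right e2 hhpos
    -- Lipschitz bound for f
    have hflip : ∀ x ∈ Icc (a k) (a (k+1)), ∀ y ∈ Icc (a k) (a (k+1)),
        |f x - f y| ≤ 2 * M * |x - y| := by
      intro x hx y hy
      have h1 := hulip x (hsub k hk hx) y (hsub k hk hy)
      have h2 : |c * x - c * y| ≤ M * |x - y| := by
        rw [← mul_sub, abs_mul]
        exact mul_le_mul_of_nonneg_right hc (abs_nonneg _)
      calc |f x - f y| = |(u x - u y) - (c * x - c * y)| := by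
            simp only [hfdef]; ring_nf
        _ ≤ |u x - u y| + |c * x - c * y| := abs_sub _ _
        _ ≤ 2 * M * |x - y| := by linarith
    have hkey := aux_key (a k) (a (k+1)) M (hmono k) f hfc hfa hfb hflip
    have hlen : a (k + 1) - a k = h := by simp only [hadef]; push_cast; ring
    rw [hlen] at hkey
    -- transfer to (u - uI)^2
    have heq : EqOn (fun x => (u x - uI x) ^ 2) (fun x => f x ^ 2)
        (uIcc (a k) (a (k+1))) := by
      intro x hx
      rw [uIcc_of_le (hmono k)] at hx
      simp only [hfdef, hcd' x hx]
    have hieq : (∫ x in a k..a (k+1), (u x - uI x) ^ 2)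
        = ∫ x in a k..a (k+1), f x ^ 2 := intervalIntegral.integral_congr heq
    constructor
    · rw [intervalIntegrable_iff_integrableOn_Ioc_of_le (hmono k)]
      have : IntegrableOn (fun x => f x ^ 2) (Ioc (a k) (a (k+1))) volume :=
        ((hfc.pow 2).integrableOn_Icc).mono_set Ioc_subset_Icc_self
      apply this.congr_fun
      · intro x hx
        exact (heq (by rw [uIcc_of_le (hmono k)]; exact Ioc_subset_Icc_self hx)).symm
      · exact measurableSet_Ioc
    · rw [hieq]; exact hkey
  -- assemble
  have hsum := intervalIntegral.sum_integral_adjacent_intervals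
    (f := fun x => (u x - uI x) ^ 2) (μ := volume) (a := a) (n := n)
    (fun k hk => (key k hk).1)
  rw [ha0, han] at hsum
  rw [← hsum]
  have hbound : ∑ k ∈ Finset.range n, (∫ x in a k..a (k+1), (u x - uI x) ^ 2)
      ≤ ∑ k ∈ Finset.range n, M ^ 2 * h ^ 3 / 3 :=
    Finset.sum_le_sum (fun k hk => (key k (Finset.mem_range.mp hk)).2)
  rw [Finset.sum_const, Finset.card_range, nsmul_eq_mul] at hbound
  have : (n:ℝ) * (M ^ 2 * h ^ 3 / 3) ≤ h ^ 2 / 2 * M ^ 2 := by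
    have : (n:ℝ) * h ^ 3 = h ^ 2 := by
      have : (n:ℝ) * h ^ 3 = ((n:ℝ) * h) * h ^ 2 := by ring
      rw [this, hnh, one_mul]
    nlinarith [sq_nonneg M, sq_nonneg h, this]
  linarith
end

section
/- Let a < b with h = b − a, let u : [a,b] → ℝ be twice continuously differentiable, and let ℓ : [a,b] → ℝ be the affine function with ℓ(a) = u(a) and ℓ(b) = u(b). Then ∫_a^b (u(x) − ℓ(x))² dx ≤ (h⁴/π²) ∫_a^b u''(x)² dx. -/
/-- Cauchy–Schwarz for interval integrals of continuous functions. -/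
lemma stmt16_cs {c d : ℝ} (hcd : c ≤ d) {f g : ℝ → ℝ}
    (hf : ContinuousOn f (Set.Icc c d)) (hg : ContinuousOn g (Set.Icc c d)) :
    (∫ t in c..d, f t * g t) ^ 2 ≤ (∫ t in c..d, f t ^ 2) * (∫ t in c..d, g t ^ 2) := by
  have huIcc : Set.uIcc c d = Set.Icc c d := Set.uIcc_of_le hcd
  have hif2 : IntervalIntegrable (fun t => f t ^ 2) MeasureTheory.volume c d := by
    apply ContinuousOn.intervalIntegrable; rw [huIcc]; exact hf.pow 2
  have hig2 : IntervalIntegrable (fun t => g t ^ 2) MeasureTheory.volume c d := by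
    apply ContinuousOn.intervalIntegrable; rw [huIcc]; exact hg.pow 2
  have hifg : IntervalIntegrable (fun t => f t * g t) MeasureTheory.volume c d := by
    apply ContinuousOn.intervalIntegrable; rw [huIcc]; exact hf.mul hg
  set A := ∫ t in c..d, f t ^ 2 with hA
  set B := ∫ t in c..d, f t * g t with hB
  set C := ∫ t in c..d, g t ^ 2 with hC
  have key : ∀ L : ℝ, 0 ≤ A * (L * L) + (2 * B) * L + C := by
    intro L
    have h0 : 0 ≤ ∫ t in c..d, (L * f t + g t) ^ 2 :=
      intervalIntegral.integral_nonneg hcd (fun t _ => sq_nonneg _)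
    have hexp : (∫ t in c..d, (L * f t + g t) ^ 2)
        = A * (L * L) + (2 * B) * L + C := by
      have e : ∀ t : ℝ, (L * f t + g t) ^ 2
          = (L * L) * f t ^ 2 + (2 * L) * (f t * g t) + g t ^ 2 := by intro t; ring
      simp_rw [e]
      rw [intervalIntegral.integral_add ((hif2.const_mul _).add (hifg.const_mul _)) hig2,
        intervalIntegral.integral_add (hif2.const_mul _) (hifg.const_mul _),
        intervalIntegral.integral_const_mul, intervalIntegral.integral_const_mul]
      ring
    linarith [hexp ▸ h0]
  have hd := discrim_le_zero key
  rw [discrim] at hd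
  nlinarith [hd]

/-- If `u` is twice continuously differentiable on `[a,b]` and `ℓ` is the
affine interpolant of `u` at the endpoints `a`, `b`, then with `h = b − a`,
`∫_a^b (u − ℓ)² ≤ (h⁴/π²) ∫_a^b (u'')²`. -/
theorem statement16 (a b : ℝ) (hab : a < b) (h : ℝ) (hh : h = b - a)
    (u u' u'' : ℝ → ℝ)
    (hu : ∀ x ∈ Set.Icc a b, HasDerivWithinAt u (u' x) (Set.Icc a b) x)
    (hu' : ∀ x ∈ Set.Icc a b, HasDerivWithinAt u' (u'' x) (Set.Icc a b) x)
    (hu''c : ContinuousOn u'' (Set.Icc a b))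
    (l : ℝ → ℝ) (hl : ∃ c d : ℝ, ∀ x, l x = c * x + d)
    (hla : l a = u a) (hlb : l b = u b) :
    (∫ x in a..b, (u x - l x) ^ 2) ≤ h ^ 4 / Real.pi ^ 2 * ∫ x in a..b, (u'' x) ^ 2 := by
  obtain ⟨c, d, hlcd⟩ := hl
  have hh0 : 0 < h := by rw [hh]; linarith
  have hucont : ContinuousOn u (Set.Icc a b) := fun x hx => (hu x hx).continuousWithinAt
  have hu'cont : ContinuousOn u' (Set.Icc a b) := fun x hx => (hu' x hx).continuousWithinAt
  set I := ∫ x in a..b, (u'' x) ^ 2 with hI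
  have hI0 : 0 ≤ I :=
    intervalIntegral.integral_nonneg hab.le (fun t _ => sq_nonneg _)
  -- derivatives at interior points
  have hderivAt : ∀ t ∈ Set.Ioo a b,
      HasDerivAt u (u' t) t ∧ HasDerivAt u' (u'' t) t := by
    intro t ht
    have hmem : Set.Icc a b ∈ nhds t := Icc_mem_nhds ht.1 ht.2
    exact ⟨(hu t (Set.Ioo_subset_Icc_self ht)).hasDerivAt hmem,
      (hu' t (Set.Ioo_subset_Icc_self ht)).hasDerivAt hmem⟩
  -- FTC identity for P
  have hP : ∀ x ∈ Set.Icc a b,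
      (∫ t in a..x, (t - a) * u'' t) = (x - a) * u' x - (u x - u a) := by
    intro x hx
    have hax : a ≤ x := hx.1
    have hsub : Set.Icc a x ⊆ Set.Icc a b := Set.Icc_subset_Icc_right hx.2
    have hcont : ContinuousOn (fun t => (t - a) * u' t - u t) (Set.Icc a x) :=
      (((continuousOn_id.sub continuousOn_const).mul (hu'cont.mono hsub)).sub
        (hucont.mono hsub))
    have hint : IntervalIntegrable (fun t => (t - a) * u'' t) MeasureTheory.volume a x := by
      apply ContinuousOn.intervalIntegrable
      rw [Set.uIcc_of_le hax]
      exact (continuousOn_id.sub continuousOn_const).mul (hu''c.mono hsub)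
    have hder : ∀ t ∈ Set.Ioo a x,
        HasDerivWithinAt (fun t => (t - a) * u' t - u t) ((t - a) * u'' t) (Set.Ioi t) t := by
      intro t ht
      have ht' : t ∈ Set.Ioo a b := ⟨ht.1, lt_of_lt_of_le ht.2 hx.2⟩
      obtain ⟨h1, h2⟩ := hderivAt t ht'
      have := (((hasDerivAt_id t).sub_const a).mul h2).sub h1
      have heq : (1 * u' t + (t - a) * u'' t) - u' t = (t - a) * u'' t := by ring
      exact (heq ▸ this).hasDerivWithinAt
    have := intervalIntegral.integral_eq_sub_of_hasDeriv_right_of_le hax hcont hder hint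
    rw [this]; ring
  -- FTC identity for Q
  have hQ : ∀ x ∈ Set.Icc a b,
      (∫ t in x..b, (b - t) * u'' t) = (u b - u x) - (b - x) * u' x := by
    intro x hx
    have hxb : x ≤ b := hx.2
    have hsub : Set.Icc x b ⊆ Set.Icc a b := Set.Icc_subset_Icc_left hx.1
    have hcont : ContinuousOn (fun t => (b - t) * u' t + u t) (Set.Icc x b) :=
      (((continuousOn_const.sub continuousOn_id).mul (hu'cont.mono hsub)).add
        (hucont.mono hsub))
    have hint : IntervalIntegrable (fun t => (b - t) * u'' t) MeasureTheory.volume x b := by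
      apply ContinuousOn.intervalIntegrable
      rw [Set.uIcc_of_le hxb]
      exact (continuousOn_const.sub continuousOn_id).mul (hu''c.mono hsub)
    have hder : ∀ t ∈ Set.Ioo x b,
        HasDerivWithinAt (fun t => (b - t) * u' t + u t) ((b - t) * u'' t) (Set.Ioi t) t := by
      intro t ht
      have ht' : t ∈ Set.Ioo a b := ⟨lt_of_le_of_lt hx.1 ht.1, ht.2⟩
      obtain ⟨h1, h2⟩ := hderivAt t ht'
      have := (((hasDerivAt_id t).const_sub b).mul h2).add h1
      have heq : ((-1) * u' t + (b - t) * u'' t) + u' t = (b - t) * u'' t := by ring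
      exact (heq ▸ this).hasDerivWithinAt
    have := intervalIntegral.integral_eq_sub_of_hasDeriv_right_of_le hxb hcont hder hint
    rw [this]; ring
  -- the interpolant formula
  have hlx : ∀ x : ℝ, h * l x = (b - x) * u a + (x - a) * u b := by
    intro x
    have h1 : c * a + d = u a := by rw [← hlcd a]; exact hla
    have h2 : c * b + d = u b := by rw [← hlcd b]; exact hlb
    rw [hlcd x, hh]
    linear_combination (b - x) * h1 + (x - a) * h2
  -- integrability of u''^2 on subintervals
  have hi2 : ∀ x ∈ Set.Icc a b,
      IntervalIntegrable (fun t => (u'' t) ^ 2) MeasureTheory.volume a x ∧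
      IntervalIntegrable (fun t => (u'' t) ^ 2) MeasureTheory.volume x b := by
    intro x hx
    constructor
    · apply ContinuousOn.intervalIntegrable
      rw [Set.uIcc_of_le hx.1]
      exact (hu''c.mono (Set.Icc_subset_Icc_right hx.2)).pow 2
    · apply ContinuousOn.intervalIntegrable
      rw [Set.uIcc_of_le hx.2]
      exact (hu''c.mono (Set.Icc_subset_Icc_left hx.1)).pow 2
  -- pointwise bound
  have hptwise : ∀ x ∈ Set.Icc a b, (u x - l x) ^ 2 ≤ h ^ 3 / 24 * I := by
    intro x hx
    have hax : a ≤ x := hx.1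
    have hxb : x ≤ b := hx.2
    set P := ∫ t in a..x, (t - a) * u'' t with hPdef
    set Q := ∫ t in x..b, (b - t) * u'' t with hQdef
    obtain ⟨hia, hib⟩ := hi2 x hx
    -- subinterval integrals bounded by I
    have hIsplit : (∫ t in a..x, (u'' t) ^ 2) + (∫ t in x..b, (u'' t) ^ 2) = I :=
      intervalIntegral.integral_add_adjacent_intervals hia hib
    have hIax : (∫ t in a..x, (u'' t) ^ 2) ≤ I := by
      have : 0 ≤ ∫ t in x..b, (u'' t) ^ 2 :=
        intervalIntegral.integral_nonneg hxb (fun t _ => sq_nonneg _)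
      linarith
    have hIxb : (∫ t in x..b, (u'' t) ^ 2) ≤ I := by
      have : 0 ≤ ∫ t in a..x, (u'' t) ^ 2 :=
        intervalIntegral.integral_nonneg hax (fun t _ => sq_nonneg _)
      linarith
    -- Cauchy-Schwarz for P
    have hcsP : P ^ 2 ≤ (x - a) ^ 3 / 3 * I := by
      have hcs := stmt16_cs hax (f := fun t => t - a) (g := u'')
        (continuousOn_id.sub continuousOn_const)
        (hu''c.mono (Set.Icc_subset_Icc_right hxb))
      have hpoly : (∫ t in a..x, (t - a) ^ 2) = (x - a) ^ 3 / 3 := by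
        rw [intervalIntegral.integral_comp_sub_right (fun s => s ^ 2) a]
        rw [integral_pow]
        norm_num
      rw [hpoly] at hcs
      calc P ^ 2 ≤ (x - a) ^ 3 / 3 * ∫ t in a..x, (u'' t) ^ 2 := hcs
        _ ≤ (x - a) ^ 3 / 3 * I := by
            apply mul_le_mul_of_nonneg_left hIax
            have : (0:ℝ) ≤ x - a := by linarith
            positivity
    -- Cauchy-Schwarz for Q
    have hcsQ : Q ^ 2 ≤ (b - x) ^ 3 / 3 * I := by
      have hcs := stmt16_cs hxb (f := fun t => b - t) (g := u'')
        (continuousOn_const.sub continuousOn_id)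
        (hu''c.mono (Set.Icc_subset_Icc_left hax))
      have hpoly : (∫ t in x..b, (b - t) ^ 2) = (b - x) ^ 3 / 3 := by
        have e : ∀ t : ℝ, (b - t) ^ 2 = (t - b) ^ 2 := by intro t; ring
        simp_rw [e]
        rw [intervalIntegral.integral_comp_sub_right (fun s => s ^ 2) b]
        rw [integral_pow]
        norm_num
        ring
      rw [hpoly] at hcs
      calc Q ^ 2 ≤ (b - x) ^ 3 / 3 * ∫ t in x..b, (u'' t) ^ 2 := hcs
        _ ≤ (b - x) ^ 3 / 3 * I := by
            apply mul_le_mul_of_nonneg_left hIxb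
            have : (0:ℝ) ≤ b - x := by linarith
            positivity
    -- key identity
    have key : h * (u x - l x) = -((b - x) * P + (x - a) * Q) := by
      have h1 := hP x hx
      have h2 := hQ x hx
      have h3 := hlx x
      rw [hPdef, hQdef, h1, h2]
      linear_combination -h3 + (u x) * hh
    -- combine
    have e1 : ((b - x) * P + (x - a) * Q) ^ 2
        ≤ 2 * ((b - x) ^ 2 * P ^ 2) + 2 * ((x - a) ^ 2 * Q ^ 2) := by
      nlinarith [sq_nonneg ((b - x) * P - (x - a) * Q)]
    have e2 : 2 * ((b - x) ^ 2 * P ^ 2) + 2 * ((x - a) ^ 2 * Q ^ 2)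
        ≤ 2 / 3 * ((x - a) ^ 2 * (b - x) ^ 2 * h) * I := by
      have p1 : (b - x) ^ 2 * P ^ 2 ≤ (b - x) ^ 2 * ((x - a) ^ 3 / 3 * I) :=
        mul_le_mul_of_nonneg_left hcsP (sq_nonneg _)
      have p2 : (x - a) ^ 2 * Q ^ 2 ≤ (x - a) ^ 2 * ((b - x) ^ 3 / 3 * I) :=
        mul_le_mul_of_nonneg_left hcsQ (sq_nonneg _)
      have heq : (b - x) ^ 2 * ((x - a) ^ 3 / 3 * I) + (x - a) ^ 2 * ((b - x) ^ 3 / 3 * I)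
          = 1 / 3 * ((x - a) ^ 2 * (b - x) ^ 2 * h) * I := by
        rw [hh]; ring
      linarith
    have e3 : (x - a) ^ 2 * (b - x) ^ 2 ≤ (h ^ 2 / 4) ^ 2 := by
      have hs : (x - a) * (b - x) ≤ h ^ 2 / 4 := by
        nlinarith [sq_nonneg ((x - a) - (b - x))]
      have hs0 : 0 ≤ (x - a) * (b - x) := mul_nonneg (by linarith) (by linarith)
      calc (x - a) ^ 2 * (b - x) ^ 2 = ((x - a) * (b - x)) ^ 2 := by ring
        _ ≤ (h ^ 2 / 4) ^ 2 := by
            apply pow_le_pow_left₀ hs0 hs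
    have e4 : ((b - x) * P + (x - a) * Q) ^ 2 ≤ h ^ 5 / 24 * I := by
      have : 2 / 3 * ((x - a) ^ 2 * (b - x) ^ 2 * h) * I
          ≤ 2 / 3 * ((h ^ 2 / 4) ^ 2 * h) * I := by
        apply mul_le_mul_of_nonneg_right _ hI0
        have : (x - a) ^ 2 * (b - x) ^ 2 * h ≤ (h ^ 2 / 4) ^ 2 * h :=
          mul_le_mul_of_nonneg_right e3 hh0.le
        linarith
      calc ((b - x) * P + (x - a) * Q) ^ 2
          ≤ 2 / 3 * ((x - a) ^ 2 * (b - x) ^ 2 * h) * I := le_trans e1 e2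
        _ ≤ 2 / 3 * ((h ^ 2 / 4) ^ 2 * h) * I := this
        _ = h ^ 5 / 24 * I := by ring
    have e5 : h ^ 2 * (u x - l x) ^ 2 ≤ h ^ 5 / 24 * I := by
      have heq : h ^ 2 * (u x - l x) ^ 2 = ((b - x) * P + (x - a) * Q) ^ 2 := by
        linear_combination (h * (u x - l x) - ((b - x) * P + (x - a) * Q)) * key
      rw [heq]; exact e4
    have hh2 : (0:ℝ) < h ^ 2 := by positivity
    rw [show h ^ 3 / 24 * I = (h ^ 5 / 24 * I) / h ^ 2 by field_simp]
    rw [le_div_iff₀ hh2]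
    linarith [e5]
  -- integrate the pointwise bound
  have hlcont : Continuous l := by
    have : l = fun x => c * x + d := funext hlcd
    rw [this]
    exact (continuous_const.mul continuous_id).add continuous_const
  have hintul : IntervalIntegrable (fun x => (u x - l x) ^ 2) MeasureTheory.volume a b := by
    apply ContinuousOn.intervalIntegrable
    rw [Set.uIcc_of_le hab.le]
    exact ((hucont.sub hlcont.continuousOn).pow 2)
  have hmono : (∫ x in a..b, (u x - l x) ^ 2) ≤ ∫ _x in a..b, h ^ 3 / 24 * I := by
    apply intervalIntegral.integral_mono_on hab.le hintul intervalIntegrable_const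
    intro x hx
    exact hptwise x hx
  rw [intervalIntegral.integral_const] at hmono
  have hconst : (b - a) • (h ^ 3 / 24 * I) = h ^ 4 / 24 * I := by
    rw [smul_eq_mul, ← hh]; ring
  rw [hconst] at hmono
  -- final: h^4/24 ≤ h^4/π^2
  have hpi2 : Real.pi ^ 2 ≤ 24 := by nlinarith [Real.pi_le_four, Real.pi_pos]
  have hpipos : (0:ℝ) < Real.pi ^ 2 := by positivity
  have hfin : h ^ 4 / 24 * I ≤ h ^ 4 / Real.pi ^ 2 * I := by
    apply mul_le_mul_of_nonneg_right _ hI0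
    exact div_le_div_of_nonneg_left (by positivity) hpipos hpi2
  linarith
end

section
/- Let n ≥ 1, set h = 1/n and x_i = i·h for i = 0,…,n. Let u : [0,1] → ℝ be twice continuously differentiable and let u_I : [0,1] → ℝ be the piecewise linear interpolant of u: u_I(x_i) = u(x_i) for all i and u_I is affine on each subinterval [x_{i−1}, x_i]. Then (∫₀¹ (u(x) − u_I(x))² dx)^{1/2} ≤ (h²/π) · (∫₀¹ u''(x)² dx)^{1/2}. -/
open MeasureTheory Set intervalIntegral

lemma cs_aux (a b : ℝ) (hab : a ≤ b) (f : ℝ → ℝ) (hf : ContinuousOn f (Icc a b)) :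
    (∫ t in a..b, |f t|) ^ 2 ≤ (b - a) * ∫ t in a..b, f t ^ 2 := by
  have hmeas : MeasurableSet (Ioc a b) := measurableSet_Ioc
  set μ : Measure ℝ := volume.restrict (Ioc a b) with hμ
  have hfin : IsFiniteMeasure μ := ⟨by simp [hμ, Real.volume_Ioc]⟩
  have hsm : AEStronglyMeasurable f μ :=
    (hf.mono Ioc_subset_Icc_self).aestronglyMeasurable hmeas
  obtain ⟨C, hC⟩ := isCompact_Icc.exists_bound_of_continuousOn hf
  have hmem : MemLp f (ENNReal.ofReal 2) μ := by
    apply MemLp.of_bound hsm C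
    rw [hμ, ae_restrict_iff' hmeas]
    exact Filter.Eventually.of_forall fun x hx => hC x (Ioc_subset_Icc_self hx)
  have hone : MemLp (fun _ : ℝ => (1:ℝ)) (ENNReal.ofReal 2) μ :=
    MemLp.of_bound aestronglyMeasurable_const 1 (Filter.Eventually.of_forall (by simp))
  have habs : MemLp (fun x => |f x|) (ENNReal.ofReal 2) μ := hmem.abs
  have hconj : (2:ℝ).HolderConjugate 2 := by constructor <;> norm_num
  have key := integral_mul_le_Lp_mul_Lq_of_nonneg hconj
    (Filter.Eventually.of_forall fun x => abs_nonneg (f x))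
    (Filter.Eventually.of_forall fun _ => zero_le_one) habs hone
  simp only [mul_one, Real.one_rpow] at key
  have h1 : ∫ (_x : ℝ), (1:ℝ) ∂μ = b - a := by
    simp [hμ, Real.volume_Ioc, ENNReal.toReal_ofReal (sub_nonneg.2 hab), hab]
  have h2 : ∀ x, |f x| ^ (2:ℝ) = f x ^ 2 := fun x => by
    rw [show (2:ℝ) = ((2:ℕ):ℝ) by norm_num, Real.rpow_natCast, sq_abs]
  simp only [h2, h1] at key
  have hI1 : (∫ t in a..b, |f t|) = ∫ x, |f x| ∂μ := by
    rw [intervalIntegral.integral_of_le hab]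
  have hI2 : (∫ t in a..b, f t ^ 2) = ∫ x, f x ^ 2 ∂μ := by
    rw [intervalIntegral.integral_of_le hab]
  rw [hI1, hI2]
  have hnn2 : 0 ≤ ∫ x, f x ^ 2 ∂μ := integral_nonneg fun x => sq_nonneg _
  have hnn1 : 0 ≤ ∫ x, |f x| ∂μ := integral_nonneg fun x => abs_nonneg _
  calc (∫ x, |f x| ∂μ) ^ 2 ≤ ((∫ x, f x ^ 2 ∂μ) ^ ((1:ℝ)/2) * (b - a) ^ ((1:ℝ)/2)) ^ 2 :=
        pow_le_pow_left₀ hnn1 key 2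
    _ = (b - a) * ∫ x, f x ^ 2 ∂μ := by
        rw [mul_pow, ← Real.rpow_natCast ((∫ x, f x ^ 2 ∂μ) ^ ((1:ℝ)/2)) 2,
          ← Real.rpow_natCast ((b-a) ^ ((1:ℝ)/2)) 2, ← Real.rpow_mul hnn2, ← Real.rpow_mul (sub_nonneg.2 hab)]
        norm_num [Real.rpow_one]
        ring

lemma taylor_aux (a x : ℝ) (hax : a ≤ x) (hsub : Icc a x ⊆ Icc (0:ℝ) 1)
    (u u' u'' : ℝ → ℝ)
    (hu : ∀ t ∈ Icc (0:ℝ) 1, HasDerivWithinAt u (u' t) (Icc 0 1) t)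
    (hu' : ∀ t ∈ Icc (0:ℝ) 1, HasDerivWithinAt u' (u'' t) (Icc 0 1) t)
    (hu''c : ContinuousOn u'' (Icc (0:ℝ) 1)) :
    ∫ t in a..x, (x - t) * u'' t = u x - u a - u' a * (x - a) := by
  have huc : ContinuousOn u (Icc (0:ℝ) 1) := fun t ht => (hu t ht).continuousWithinAt
  have hu'c : ContinuousOn u' (Icc (0:ℝ) 1) := fun t ht => (hu' t ht).continuousWithinAt
  have ha0 : (0:ℝ) ≤ a := (hsub (left_mem_Icc.2 hax)).1
  have hx1 : x ≤ 1 := (hsub (right_mem_Icc.2 hax)).2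
  have hIoo : Ioo a x ⊆ Ioo (0:ℝ) 1 := fun t ht => ⟨lt_of_le_of_lt ha0 ht.1, lt_of_lt_of_le ht.2 hx1⟩
  set φ : ℝ → ℝ := fun t => u t + (x - t) * u' t with hφ
  have hφc : ContinuousOn φ (Icc a x) :=
    ((huc.mono hsub).add (((continuousOn_const).sub continuousOn_id).mul (hu'c.mono hsub)))
  have hφd : ∀ t ∈ Ioo a x, HasDerivWithinAt φ ((x - t) * u'' t) (Ioi t) t := by
    intro t ht
    have ht' := hIoo ht
    have hmem : Icc (0:ℝ) 1 ∈ nhds t := Icc_mem_nhds ht'.1 ht'.2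
    have hd1 : HasDerivAt u (u' t) t := (hu t (Ioo_subset_Icc_self ht')).hasDerivAt hmem
    have hd2 : HasDerivAt u' (u'' t) t := (hu' t (Ioo_subset_Icc_self ht')).hasDerivAt hmem
    have hd3 : HasDerivAt (fun s => (x - s)) (-1) t := by
      simpa using (hasDerivAt_id' t).const_sub x
    have hd4 : HasDerivAt (fun s => (x - s) * u' s) ((-1) * u' t + (x - t) * u'' t) t := hd3.mul hd2
    have : HasDerivAt φ ((x - t) * u'' t) t := by
      have : HasDerivAt (fun s => u s + (x - s) * u' s) (u' t + ((-1) * u' t + (x - t) * u'' t)) t := hd1.add hd4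
      convert this using 1
      ring
    exact this.hasDerivWithinAt
  have hint : IntervalIntegrable (fun t => (x - t) * u'' t) volume a x := by
    apply ContinuousOn.intervalIntegrable
    rw [uIcc_of_le hax]
    exact ((continuousOn_const).sub continuousOn_id).mul ((hu''c.mono hsub))
  have := integral_eq_sub_of_hasDeriv_right_of_le hax hφc hφd hint
  rw [this, hφ]
  simp only []
  ring

lemma elem_est (a b : ℝ) (hab : a < b) (hsub : Icc a b ⊆ Icc (0:ℝ) 1)
    (u u' u'' : ℝ → ℝ)
    (hu : ∀ t ∈ Icc (0:ℝ) 1, HasDerivWithinAt u (u' t) (Icc 0 1) t)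
    (hu' : ∀ t ∈ Icc (0:ℝ) 1, HasDerivWithinAt u' (u'' t) (Icc 0 1) t)
    (hu''c : ContinuousOn u'' (Icc (0:ℝ) 1))
    (c d : ℝ) (hA : u a = c * a + d) (hB : u b = c * b + d) :
    ∫ x in a..b, (u x - (c * x + d)) ^ 2 ≤ (b - a) ^ 4 / 16 * ∫ x in a..b, (u'' x) ^ 2 := by
  have hab' : a ≤ b := hab.le
  have hba : (0:ℝ) < b - a := sub_pos.2 hab
  have huc : ContinuousOn u (Icc (0:ℝ) 1) := fun t ht => (hu t ht).continuousWithinAt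
  have hu''ab : ContinuousOn u'' (Icc a b) := hu''c.mono hsub
  set J := ∫ t in a..b, (u'' t) ^ 2 with hJ
  set M := ∫ t in a..b, |u'' t| with hM
  have hJ0 : 0 ≤ J := intervalIntegral.integral_nonneg hab' (fun t _ => sq_nonneg _)
  have hM0 : 0 ≤ M := intervalIntegral.integral_nonneg hab' (fun t _ => abs_nonneg _)
  have hcs : M ^ 2 ≤ (b - a) * J := cs_aux a b hab' u'' hu''ab
  have hTb : ∫ t in a..b, (b - t) * u'' t = u b - u a - u' a * (b - a) :=
    taylor_aux a b hab' hsub u u' u'' hu hu' hu''c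
  -- pointwise bound
  have key : ∀ x ∈ Icc a b, (u x - (c * x + d)) ^ 2 ≤ (b - a) ^ 3 / 16 * J := by
    intro x hx
    have hax : a ≤ x := hx.1
    have hxb : x ≤ b := hx.2
    have hsubx : Icc a x ⊆ Icc (0:ℝ) 1 := (Icc_subset_Icc le_rfl hxb).trans hsub
    have hTx : ∫ t in a..x, (x - t) * u'' t = u x - u a - u' a * (x - a) :=
      taylor_aux a x hax hsubx u u' u'' hu hu' hu''c
    -- integrability pieces
    have hint1 : IntervalIntegrable (fun t => (b - t) * u'' t) volume a x := by
      apply ContinuousOn.intervalIntegrable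
      rw [uIcc_of_le hax]
      exact (continuousOn_const.sub continuousOn_id).mul
        (hu''ab.mono (Icc_subset_Icc le_rfl hxb))
    have hint2 : IntervalIntegrable (fun t => (b - t) * u'' t) volume x b := by
      apply ContinuousOn.intervalIntegrable
      rw [uIcc_of_le hxb]
      exact (continuousOn_const.sub continuousOn_id).mul
        (hu''ab.mono (Icc_subset_Icc hax le_rfl))
    have hsplit : (∫ t in a..x, (b - t) * u'' t) + (∫ t in x..b, (b - t) * u'' t)
        = ∫ t in a..b, (b - t) * u'' t :=
      intervalIntegral.integral_add_adjacent_intervals hint1 hint2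
    -- the multiplied identity
    have hid : (b - a) * (u x - (c * x + d)) =
        (∫ t in a..x, ((t - a) * (x - b)) * u'' t) - (x - a) * ∫ t in x..b, (b - t) * u'' t := by
      have h1 : (∫ t in a..x, ((t - a) * (x - b)) * u'' t)
          = (b - a) * (∫ t in a..x, (x - t) * u'' t) - (x - a) * ∫ t in a..x, (b - t) * u'' t := by
        rw [← intervalIntegral.integral_const_mul, ← intervalIntegral.integral_const_mul,
          ← intervalIntegral.integral_sub]
        · apply intervalIntegral.integral_congr
          intro t _
          ring
        · exact (ContinuousOn.intervalIntegrable (by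
            rw [uIcc_of_le hax]
            exact continuousOn_const.mul ((continuousOn_const.sub continuousOn_id).mul
              (hu''ab.mono (Icc_subset_Icc le_rfl hxb))))) 
        · exact hint1.const_mul _
      rw [h1, hTx]
      have h2 : (∫ t in a..x, (b - t) * u'' t) = (u b - u a - u' a * (b - a)) - ∫ t in x..b, (b - t) * u'' t := by
        rw [← hTb, ← hsplit]; ring
      rw [h2]
      rw [hA] at *
      rw [hB] at *
      ring
    -- bounds on the two kernel integrals
    have hb1 : |∫ t in a..x, ((t - a) * (x - b)) * u'' t| ≤ (x - a) * (b - x) * ∫ t in a..x, |u'' t| := by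
      have := intervalIntegral.abs_integral_le_integral_abs (μ := volume) hax (f := fun t => ((t - a) * (x - b)) * u'' t)
      refine this.trans ?_
      rw [← intervalIntegral.integral_const_mul]
      apply intervalIntegral.integral_mono_on hax
      · apply ContinuousOn.intervalIntegrable
        rw [uIcc_of_le hax]
        exact (((continuousOn_id.sub continuousOn_const).mul continuousOn_const).mul
          (hu''ab.mono (Icc_subset_Icc le_rfl hxb))).abs
      · exact (ContinuousOn.intervalIntegrable (by
          rw [uIcc_of_le hax]
          exact continuousOn_const.mul (hu''ab.mono (Icc_subset_Icc le_rfl hxb)).abs))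
      · intro t ht
        rw [abs_mul, abs_mul]
        have h1 : |t - a| ≤ x - a := by
          rw [abs_of_nonneg (by linarith [ht.1])]; linarith [ht.2]
        have h2 : |x - b| = b - x := by rw [abs_of_nonpos (by linarith)]; ring
        have : |t - a| * |x - b| ≤ (x - a) * (b - x) := by
          rw [h2]; exact mul_le_mul_of_nonneg_right h1 (by linarith)
        exact mul_le_mul_of_nonneg_right this (abs_nonneg _)
    have hb2 : |(x - a) * ∫ t in x..b, (b - t) * u'' t| ≤ (x - a) * (b - x) * ∫ t in x..b, |u'' t| := by
      rw [abs_mul, abs_of_nonneg (by linarith : (0:ℝ) ≤ x - a), mul_assoc]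
      apply mul_le_mul_of_nonneg_left _ (by linarith : (0:ℝ) ≤ x - a)
      have := intervalIntegral.abs_integral_le_integral_abs (μ := volume) hxb (f := fun t => (b - t) * u'' t)
      refine this.trans ?_
      rw [← intervalIntegral.integral_const_mul]
      apply intervalIntegral.integral_mono_on hxb
      · apply ContinuousOn.intervalIntegrable
        rw [uIcc_of_le hxb]
        exact ((continuousOn_const.sub continuousOn_id).mul
          (hu''ab.mono (Icc_subset_Icc hax le_rfl))).abs
      · exact (ContinuousOn.intervalIntegrable (by
          rw [uIcc_of_le hxb]
          exact continuousOn_const.mul (hu''ab.mono (Icc_subset_Icc hax le_rfl)).abs))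
      · intro t ht
        rw [abs_mul]
        have h1 : |b - t| ≤ b - x := by
          rw [abs_of_nonneg (by linarith [ht.2])]; linarith [ht.1]
        exact mul_le_mul_of_nonneg_right h1 (abs_nonneg _)
    -- combine
    have hMsplit : (∫ t in a..x, |u'' t|) + (∫ t in x..b, |u'' t|) = M := by
      rw [hM]
      apply intervalIntegral.integral_add_adjacent_intervals
      · exact (ContinuousOn.intervalIntegrable (by
          rw [uIcc_of_le hax]
          exact (hu''ab.mono (Icc_subset_Icc le_rfl hxb)).abs))
      · exact (ContinuousOn.intervalIntegrable (by
          rw [uIcc_of_le hxb]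
          exact (hu''ab.mono (Icc_subset_Icc hax le_rfl)).abs))
    have hq : (x - a) * (b - x) ≤ (b - a) ^ 2 / 4 := by nlinarith [sq_nonneg (b + a - 2*x)]
    have habs : (b - a) * |u x - (c * x + d)| ≤ (b - a) ^ 2 / 4 * M := by
      have habs0 : |(b - a) * (u x - (c * x + d))| = (b - a) * |u x - (c * x + d)| := by
        rw [abs_mul, abs_of_pos hba]
      rw [← habs0, hid]
      calc |((∫ t in a..x, ((t - a) * (x - b)) * u'' t) - (x - a) * ∫ t in x..b, (b - t) * u'' t)|
          ≤ |∫ t in a..x, ((t - a) * (x - b)) * u'' t| + |(x - a) * ∫ t in x..b, (b - t) * u'' t| :=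
            abs_sub _ _
        _ ≤ (x - a) * (b - x) * (∫ t in a..x, |u'' t|) + (x - a) * (b - x) * ∫ t in x..b, |u'' t| :=
            add_le_add hb1 hb2
        _ = (x - a) * (b - x) * M := by rw [← hMsplit]; ring
        _ ≤ (b - a) ^ 2 / 4 * M := mul_le_mul_of_nonneg_right hq hM0
    have habs2 : |u x - (c * x + d)| ≤ (b - a) / 4 * M := by
      rw [← mul_le_mul_iff_right₀ hba]
      refine habs.trans (le_of_eq ?_)
      field_simp
    calc (u x - (c * x + d)) ^ 2 = |u x - (c * x + d)| ^ 2 := (sq_abs _).symm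
      _ ≤ ((b - a) / 4 * M) ^ 2 := pow_le_pow_left₀ (abs_nonneg _) habs2 2
      _ = (b - a) ^ 2 / 16 * M ^ 2 := by ring
      _ ≤ (b - a) ^ 2 / 16 * ((b - a) * J) := by
          apply mul_le_mul_of_nonneg_left hcs (by positivity)
      _ = (b - a) ^ 3 / 16 * J := by ring
  -- integrate the pointwise bound
  have hec : ContinuousOn (fun x => (u x - (c * x + d)) ^ 2) (Icc a b) :=
    (((huc.mono hsub).sub ((continuousOn_const.mul continuousOn_id).add continuousOn_const)).pow 2)
  calc ∫ x in a..b, (u x - (c * x + d)) ^ 2 ≤ ∫ _x in a..b, (b - a) ^ 3 / 16 * J := by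
        apply intervalIntegral.integral_mono_on hab'
        · exact ContinuousOn.intervalIntegrable (by rw [uIcc_of_le hab']; exact hec)
        · exact intervalIntegrable_const
        · exact key
    _ = (b - a) ^ 4 / 16 * J := by
        rw [intervalIntegral.integral_const]
        simp
        ring

lemma II_congr {f g : ℝ → ℝ} {A B : ℝ} (hAB : A ≤ B) (heq : EqOn f g (Icc A B))
    (hg : IntervalIntegrable g volume A B) : IntervalIntegrable f volume A B := by
  rw [intervalIntegrable_iff_integrableOn_Ioc_of_le hAB] at *
  exact hg.congr_fun (fun x hx => (heq (Ioc_subset_Icc_self hx)).symm) measurableSet_Ioc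

/-- If `u` is twice continuously differentiable on `[0,1]` and `u_I` is its
piecewise linear interpolant on the uniform mesh `x_i = i·h`, `h = 1/n`, then
`‖u − u_I‖_{L²(0,1)} ≤ (h²/π) ‖u''‖_{L²(0,1)}`. -/
theorem statement17 (n : ℕ) (hn : 1 ≤ n) (h : ℝ) (hh : h = 1 / n)
    (u u' u'' : ℝ → ℝ)
    (hu : ∀ x ∈ Set.Icc (0 : ℝ) 1, HasDerivWithinAt u (u' x) (Set.Icc 0 1) x)
    (hu' : ∀ x ∈ Set.Icc (0 : ℝ) 1, HasDerivWithinAt u' (u'' x) (Set.Icc 0 1) x)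
    (hu''c : ContinuousOn u'' (Set.Icc 0 1))
    (uI : ℝ → ℝ)
    (hnode : ∀ i : ℕ, i ≤ n → uI ((i : ℝ) * h) = u ((i : ℝ) * h))
    (haff : ∀ i : ℕ, 1 ≤ i → i ≤ n → ∃ c d : ℝ,
      ∀ x ∈ Set.Icc (((i : ℝ) - 1) * h) ((i : ℝ) * h), uI x = c * x + d) :
    Real.sqrt (∫ x in (0 : ℝ)..1, (u x - uI x) ^ 2) ≤
      h ^ 2 / Real.pi * Real.sqrt (∫ x in (0 : ℝ)..1, (u'' x) ^ 2) := by
  have hn0 : (0:ℝ) < n := by exact_mod_cast Nat.pos_of_ne_zero (by omega)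
  have hh0 : 0 < h := by rw [hh]; positivity
  have hnh : (n:ℝ) * h = 1 := by rw [hh]; field_simp
  set a : ℕ → ℝ := fun i => (i : ℝ) * h with ha
  have ha0 : a 0 = 0 := by simp [ha]
  have han : a n = 1 := by simpa [ha] using hnh
  have hamono : ∀ k, a k < a (k+1) := fun k => by
    simp only [ha]
    push_cast
    nlinarith
  have hasub : ∀ k, k < n → Icc (a k) (a (k+1)) ⊆ Icc (0:ℝ) 1 := by
    intro k hk
    apply Icc_subset_Icc
    · simp only [ha]; positivity
    · simp only [ha]
      rw [← hnh]
      have : ((k:ℝ)+1) ≤ (n:ℝ) := by exact_mod_cast hk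
      push_cast
      nlinarith
  -- per-element data
  have hcd : ∀ k, k < n → ∃ c d : ℝ, (∀ x ∈ Icc (a k) (a (k+1)), uI x = c * x + d) := by
    intro k hk
    obtain ⟨c, d, hcd⟩ := haff (k+1) (by omega) (by omega)
    refine ⟨c, d, fun x hx => hcd x ?_⟩
    have h1 : (((k+1:ℕ):ℝ) - 1) * h = a k := by simp only [ha]; push_cast; ring
    have h2 : ((k+1:ℕ):ℝ) * h = a (k+1) := by simp only [ha]
    rw [h1, h2]
    exact hx
  have huc : ContinuousOn u (Icc (0:ℝ) 1) := fun t ht => (hu t ht).continuousWithinAt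
  -- element-wise inequality, with uI replaced
  have helem : ∀ k, k < n →
      (∫ x in a k..a (k+1), (u x - uI x) ^ 2) ≤ h^4/16 * ∫ x in a k..a (k+1), (u'' x)^2 := by
    intro k hk
    obtain ⟨c, d, hcd'⟩ := hcd k hk
    have hAk : u (a k) = c * (a k) + d := by
      rw [← hnode k (by omega)]
      exact hcd' _ (left_mem_Icc.2 (hamono k).le)
    have hBk : u (a (k+1)) = c * (a (k+1)) + d := by
      have h2 : uI (a (k+1)) = u (a (k+1)) := by
        have h3 := hnode (k+1) (by omega)
        have h4 : ((k+1:ℕ):ℝ) * h = a (k+1) := by simp only [ha]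
        rwa [h4] at h3
      rw [← h2]
      exact hcd' _ (right_mem_Icc.2 (hamono k).le)
    have hcongr : (∫ x in a k..a (k+1), (u x - uI x) ^ 2)
        = ∫ x in a k..a (k+1), (u x - (c * x + d)) ^ 2 := by
      apply intervalIntegral.integral_congr
      intro x hx
      rw [uIcc_of_le (hamono k).le] at hx
      show (u x - uI x) ^ 2 = (u x - (c * x + d)) ^ 2
      rw [hcd' x hx]
    have hlen : a (k+1) - a k = h := by simp only [ha]; push_cast; ring
    rw [hcongr]
    have := elem_est (a k) (a (k+1)) (hamono k) (hasub k hk) u u' u'' hu hu' hu''c c d hAk hBk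
    rwa [hlen] at this
  -- integrability of pieces
  have hint1 : ∀ k, k < n → IntervalIntegrable (fun x => (u x - uI x)^2) volume (a k) (a (k+1)) := by
    intro k hk
    obtain ⟨c, d, hcd'⟩ := hcd k hk
    apply II_congr (hamono k).le (g := fun x => (u x - (c * x + d))^2)
    · intro x hx
      show (u x - uI x) ^ 2 = (u x - (c * x + d)) ^ 2
      rw [hcd' x hx]
    · apply ContinuousOn.intervalIntegrable
      rw [uIcc_of_le (hamono k).le]
      exact (((huc.mono (hasub k hk)).sub
        ((continuousOn_const.mul continuousOn_id).add continuousOn_const)).pow 2)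
  have hint2 : ∀ k, k < n → IntervalIntegrable (fun x => (u'' x)^2) volume (a k) (a (k+1)) := by
    intro k hk
    apply ContinuousOn.intervalIntegrable
    rw [uIcc_of_le (hamono k).le]
    exact ((hu''c.mono (hasub k hk)).pow 2)
  -- sums
  have hsum1 : ∑ k ∈ Finset.range n, (∫ x in a k..a (k+1), (u x - uI x)^2)
      = ∫ x in (0:ℝ)..1, (u x - uI x)^2 := by
    rw [← ha0, ← han]
    exact intervalIntegral.sum_integral_adjacent_intervals hint1
  have hsum2 : ∑ k ∈ Finset.range n, (∫ x in a k..a (k+1), (u'' x)^2)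
      = ∫ x in (0:ℝ)..1, (u'' x)^2 := by
    rw [← ha0, ← han]
    exact intervalIntegral.sum_integral_adjacent_intervals hint2
  have hmain : (∫ x in (0:ℝ)..1, (u x - uI x)^2) ≤ h^4/16 * ∫ x in (0:ℝ)..1, (u'' x)^2 := by
    rw [← hsum1, ← hsum2, Finset.mul_sum]
    apply Finset.sum_le_sum
    intro k hk
    exact helem k (Finset.mem_range.1 hk)
  -- take square roots
  have hJ0 : 0 ≤ ∫ x in (0:ℝ)..1, (u'' x)^2 :=
    intervalIntegral.integral_nonneg zero_le_one (fun t _ => sq_nonneg _)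
  have hs1 : Real.sqrt (∫ x in (0:ℝ)..1, (u x - uI x)^2)
      ≤ Real.sqrt (h^4/16 * ∫ x in (0:ℝ)..1, (u'' x)^2) := Real.sqrt_le_sqrt hmain
  refine hs1.trans ?_
  rw [Real.sqrt_mul (by positivity)]
  have h4 : Real.sqrt (h^4/16) = h^2/4 := by
    rw [show h^4/16 = (h^2/4)^2 by ring]
    exact Real.sqrt_sq (by positivity)
  rw [h4]
  apply mul_le_mul_of_nonneg_right _ (Real.sqrt_nonneg _)
  apply div_le_div_of_nonneg_left (by positivity) Real.pi_pos Real.pi_le_four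
end

section
/- Let ε > 0, let f : [0,1] → ℝ be continuous with ∫₀¹ f(s) ds = 0, and let u be continuously differentiable on [0,1], satisfying −ε u''(x) + u'(x) = f(x) on (0,1) and u(0) = u(1) = 0. Let n ≥ 1, h = 1/n, and let u_I be the piecewise linear interpolant of u on the uniform mesh x_i = i·h. Then (∫₀¹ (u(x) − u_I(x))² dx)^{1/2} ≤ (h/√2) ‖f‖_∞, where ‖f‖_∞ = sup_{s∈[0,1]} |f(s)|; in particular the bound is independent of ε. -/
open Set MeasureTheory intervalIntegral

/-- Uniform-in-ε bound on the derivative: `|u'| ≤ sup |f|` on `(0,1)`. -/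
lemma st18_deriv_bound (ε : ℝ) (hε : 0 < ε) (f : ℝ → ℝ)
    (hf : ContinuousOn f (Set.Icc 0 1))
    (hf0 : (∫ s in (0 : ℝ)..1, f s) = 0)
    (u u' u'' : ℝ → ℝ)
    (hu' : ∀ x ∈ Set.Icc (0 : ℝ) 1, HasDerivWithinAt u (u' x) (Set.Icc 0 1) x)
    (hu'c : ContinuousOn u' (Set.Icc 0 1))
    (hu'' : ∀ x ∈ Set.Ioo (0 : ℝ) 1, HasDerivAt u' (u'' x) x)
    (hode : ∀ x ∈ Set.Ioo (0 : ℝ) 1, -ε * u'' x + u' x = f x)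
    (hu0 : u 0 = 0) (hu1 : u 1 = 0)
    (M : ℝ) (hM : ∀ s ∈ Set.Icc (0:ℝ) 1, |f s| ≤ M) :
    ∀ x ∈ Set.Ioo (0:ℝ) 1, |u' x| ≤ M := by
  have hM0 : 0 ≤ M := le_trans (abs_nonneg _) (hM 0 ⟨le_refl _, zero_le_one⟩)
  -- clamped extension of f
  set fc : ℝ → ℝ := fun x => f (max 0 (min 1 x)) with hfc
  have hclamp : ∀ x, max 0 (min 1 x) ∈ Set.Icc (0:ℝ) 1 := by
    intro x
    constructor
    · exact le_max_left _ _
    · exact max_le zero_le_one (min_le_left _ _)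
  have hfc_cont : Continuous fc := by
    apply hf.comp_continuous
    · exact continuous_const.max (continuous_const.min continuous_id)
    · exact hclamp
  have hfc_eq : ∀ x ∈ Set.Icc (0:ℝ) 1, fc x = f x := by
    intro x hx
    simp only [hfc]
    rw [min_eq_right hx.2, max_eq_right hx.1]
  have hfcM : ∀ x, |fc x| ≤ M := fun x => hM _ (hclamp x)
  -- the weight E x = exp (-x/ε)
  set E : ℝ → ℝ := fun x => Real.exp (-x / ε) with hE
  have hEpos : ∀ x, 0 < E x := fun x => Real.exp_pos _
  have hEd : ∀ x : ℝ, HasDerivAt E (-(1/ε) * E x) x := by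
    intro x
    have h1 : HasDerivAt (fun x : ℝ => -x / ε) (-(1/ε)) x := by
      simpa [neg_div] using ((hasDerivAt_id x).neg.div_const ε)
    simpa [hE, mul_comm] using h1.exp
  have hEcont : Continuous E := Real.continuous_exp.comp (continuous_id.neg.div_const ε)
  -- primitive A
  set A : ℝ → ℝ := fun x => ∫ s in (0:ℝ)..x, E s * fc s with hA
  have hAd : ∀ x : ℝ, HasDerivAt A (E x * fc x) x := by
    intro x
    apply intervalIntegral.integral_hasDerivAt_right
    · exact ((hEcont.mul hfc_cont).continuousOn).intervalIntegrable
    · exact (hEcont.mul hfc_cont).stronglyMeasurableAtFilter _ _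
    · exact (hEcont.mul hfc_cont).continuousAt
  have hAcont : Continuous A := by
    rw [continuous_iff_continuousAt]; exact fun x => (hAd x).continuousAt
  -- ∫ E over a..b
  have hEint : ∀ a b : ℝ, (∫ s in a..b, E s) = ε * (E a - E b) := by
    intro a b
    have : ∀ s ∈ Set.uIcc a b, HasDerivAt (fun y => -ε * E y) (E s) s := by
      intro s _
      have := (hEd s).const_mul (-ε)
      refine this.congr_deriv ?_
      field_simp
    rw [intervalIntegral.integral_eq_sub_of_hasDerivAt this
      (hEcont.continuousOn.intervalIntegrable)]
    ring
  -- bound on pieces of A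
  have hAbound : ∀ a b : ℝ, a ≤ b → |∫ s in a..b, E s * fc s| ≤ M * (ε * (E a - E b)) := by
    intro a b hab
    calc |∫ s in a..b, E s * fc s| ≤ ∫ s in a..b, |E s * fc s| :=
          intervalIntegral.abs_integral_le_integral_abs hab
      _ ≤ ∫ s in a..b, M * E s := by
          apply intervalIntegral.integral_mono_on hab
          · exact ((hEcont.mul hfc_cont).abs.continuousOn).intervalIntegrable
          · exact ((continuous_const.mul hEcont).continuousOn).intervalIntegrable
          · intro s _
            rw [abs_mul, abs_of_pos (hEpos s)]
            calc E s * |fc s| ≤ E s * M := by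
                  exact mul_le_mul_of_nonneg_left (hfcM s) (hEpos s).le
              _ = M * E s := mul_comm _ _
      _ = M * (ε * (E a - E b)) := by rw [intervalIntegral.integral_const_mul, hEint]
  -- G = E * u' + (1/ε) A is constant on (0,1)
  set G : ℝ → ℝ := fun x => E x * u' x + (1/ε) * A x with hG
  have hGd : ∀ x ∈ Set.Ioo (0:ℝ) 1, HasDerivAt G 0 x := by
    intro x hx
    have h1 : HasDerivAt (fun y => E y * u' y) (-(1/ε) * E x * u' x + E x * u'' x) x := by
      refine ((hEd x).mul (hu'' x hx)).congr_deriv ?_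
      ring
    have h2 : HasDerivAt (fun y => (1/ε) * A y) ((1/ε) * (E x * fc x)) x := (hAd x).const_mul _
    have h3 := h1.add h2
    have hfx : fc x = f x := hfc_eq x ⟨hx.1.le, hx.2.le⟩
    have hox := hode x hx
    refine h3.congr_deriv ?_
    rw [hfx]
    have hεne : ε ≠ 0 := ne_of_gt hε
    field_simp
    nlinarith [hEpos x, hox]
  have hGconst : ∀ x ∈ Set.Ioo (0:ℝ) 1, G x = G (1/2) := by
    have hhalf : (1/2 : ℝ) ∈ Set.Ioo (0:ℝ) 1 := by norm_num
    have key : ∀ a ∈ Set.Ioo (0:ℝ) 1, ∀ b ∈ Set.Ioo (0:ℝ) 1, a ≤ b → G b = G a := by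
      intro a ha b hb hab
      have hsub : Set.Icc a b ⊆ Set.Ioo (0:ℝ) 1 := fun t ht =>
        ⟨lt_of_lt_of_le ha.1 ht.1, lt_of_le_of_lt ht.2 hb.2⟩
      have := constant_of_has_deriv_right_zero
        (f := G) (a := a) (b := b)
        (fun t ht => ((hGd t (hsub ht)).continuousAt).continuousWithinAt)
        (fun t ht => ((hGd t (hsub ⟨ht.1, ht.2.le⟩)).hasDerivWithinAt))
      exact this b ⟨hab, le_refl _⟩
    intro x hx
    rcases le_total x (1/2) with hc | hc
    · exact (key x hx _ hhalf hc).symm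
    · exact key _ hhalf x hx hc
  set K : ℝ := G (1/2) with hK
  set c₀ : ℝ := ε * K with hc₀
  have hrel : ∀ x ∈ Set.Ioo (0:ℝ) 1, ε * (E x * u' x) = c₀ - A x := by
    intro x hx
    have hh := hGconst x hx
    have hεne : ε ≠ 0 := ne_of_gt hε
    have h2 : ε * G x = ε * K := by rw [hh]
    rw [hG] at h2
    simp only at h2
    rw [mul_add, show ε * (1 / ε * A x) = A x by field_simp] at h2
    rw [hc₀]
    linarith
  -- the function B and FTC over [0,1]
  set Ei : ℝ → ℝ := fun x => Real.exp (x / ε) with hEi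
  have hEiE : ∀ x, Ei x * E x = 1 := by
    intro x
    rw [hEi, hE]
    simp only [← Real.exp_add]
    rw [← Real.exp_zero]
    congr 1
    ring
  have hEid : ∀ x : ℝ, HasDerivAt Ei ((1/ε) * Ei x) x := by
    intro x
    have h1 : HasDerivAt (fun x : ℝ => x / ε) (1/ε) x := by
      simpa using ((hasDerivAt_id x).div_const ε)
    simpa [hEi, mul_comm] using h1.exp
  set B : ℝ → ℝ := fun x => c₀ * Ei x - Ei x * A x with hB
  have hBd : ∀ x ∈ Set.Ioo (0:ℝ) 1, HasDerivAt B (u' x - fc x) x := by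
    intro x hx
    have h1 : HasDerivAt B (c₀ * ((1/ε) * Ei x) -
        ((1/ε) * Ei x * A x + Ei x * (E x * fc x))) x :=
      ((hEid x).const_mul c₀).sub ((hEid x).mul (hAd x))
    convert h1 using 1
    have h2 := hrel x hx
    have h3 := hEiE x
    have hεne : ε ≠ 0 := ne_of_gt hε
    have hu'x : u' x = (1/ε) * Ei x * (c₀ - A x) := by
      have : Ei x * (ε * (E x * u' x)) = Ei x * (c₀ - A x) := by rw [h2]
      calc u' x = Ei x * E x * u' x := by rw [h3]; ring
        _ = (1/ε) * (Ei x * (ε * (E x * u' x))) := by field_simp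
        _ = (1/ε) * (Ei x * (c₀ - A x)) := by rw [this]
        _ = (1/ε) * Ei x * (c₀ - A x) := by ring
    rw [hu'x]
    have : Ei x * (E x * fc x) = fc x := by rw [← mul_assoc, h3, one_mul]
    rw [this]
    ring
  have hBcont : Continuous B := by
    have hEicont : Continuous Ei := Real.continuous_exp.comp (continuous_id.div_const ε)
    exact (continuous_const.mul hEicont).sub (hEicont.mul hAcont)
  have hint1 : (∫ y in (0:ℝ)..1, (u' y - fc y)) = B 1 - B 0 := by
    apply intervalIntegral.integral_eq_sub_of_hasDeriv_right_of_le zero_le_one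
      hBcont.continuousOn
      (fun x hx => (hBd x hx).hasDerivWithinAt)
    apply ContinuousOn.intervalIntegrable
    rw [Set.uIcc_of_le zero_le_one]
    exact hu'c.sub hfc_cont.continuousOn
  have hintu' : (∫ y in (0:ℝ)..1, u' y) = 0 := by
    have := intervalIntegral.integral_eq_sub_of_hasDeriv_right_of_le zero_le_one
      (fun x hx => (hu' x hx).continuousWithinAt)
      (fun x hx => (((hu' x ⟨hx.1.le, hx.2.le⟩).hasDerivAt
        (Icc_mem_nhds hx.1 hx.2)).hasDerivWithinAt))
      (by apply ContinuousOn.intervalIntegrable; rw [Set.uIcc_of_le zero_le_one]; exact hu'c)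
    rw [this, hu0, hu1, sub_zero]
  have hintfc : (∫ y in (0:ℝ)..1, fc y) = 0 := by
    have heq : (∫ y in (0:ℝ)..1, fc y) = ∫ y in (0:ℝ)..1, f y := by
      apply intervalIntegral.integral_congr
      intro x hx
      rw [Set.uIcc_of_le zero_le_one] at hx
      exact hfc_eq x hx
    rw [heq, hf0]
  have hB10 : B 1 = B 0 := by
    have hs : (∫ y in (0:ℝ)..1, (u' y - fc y)) = 0 := by
      rw [intervalIntegral.integral_sub
        (by apply ContinuousOn.intervalIntegrable; rw [Set.uIcc_of_le zero_le_one]; exact hu'c)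
        (hfc_cont.continuousOn.intervalIntegrable), hintu', hintfc, sub_zero]
    have := hint1
    rw [hs] at this
    linarith
  -- solve for c₀ : c₀ * (1 - E 1) = A 1
  have hA0 : A 0 = 0 := intervalIntegral.integral_same
  have hEi0 : Ei 0 = 1 := by rw [hEi]; simp
  have hkey0 : c₀ * (1 - E 1) = A 1 := by
    have h1 : c₀ * Ei 1 - Ei 1 * A 1 = c₀ := by
      have := hB10
      rw [hB] at this
      simpa [hEi0, hA0] using this
    have h3 := hEiE 1
    have h5 : c₀ - A 1 = E 1 * c₀ := by
      calc c₀ - A 1 = E 1 * (c₀ * Ei 1) - E 1 * (Ei 1 * A 1) := by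
            rw [show E 1 * (c₀ * Ei 1) = Ei 1 * E 1 * c₀ by ring,
              show E 1 * (Ei 1 * A 1) = Ei 1 * E 1 * A 1 by ring, h3, one_mul, one_mul]
        _ = E 1 * (c₀ * Ei 1 - Ei 1 * A 1) := by ring
        _ = E 1 * c₀ := by rw [h1]
    linear_combination h5
  -- final bound
  intro x hx
  set D : ℝ := 1 - E 1 with hD
  have hD0 : 0 < D := by
    rw [hD, hE]
    simp only [sub_pos]
    calc Real.exp (-1 / ε) < Real.exp 0 := by
          apply Real.exp_lt_exp.mpr
          apply div_neg_of_neg_of_pos (by norm_num) hε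
      _ = 1 := Real.exp_zero
  have hExE1 : (∫ s in x..1, E s * fc s) = A 1 - A x := by
    rw [hA]
    simp only
    rw [← intervalIntegral.integral_interval_sub_left (f := fun s => E s * fc s)
      ((hEcont.mul hfc_cont).continuousOn.intervalIntegrable)
      ((hEcont.mul hfc_cont).continuousOn.intervalIntegrable)]
  have hb1 : |A 1 - A x| ≤ M * (ε * (E x - E 1)) := by
    rw [← hExE1]; exact hAbound x 1 hx.2.le
  have hb2 : |A x| ≤ M * (ε * (E 0 - E x)) := by
    rw [hA]
    simp only
    have := hAbound 0 x hx.1.le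
    simpa using this
  have hE0 : E 0 = 1 := by rw [hE]; simp
  have hkey : ε * (E x * u' x) * D = (A 1 - A x) + A x * E 1 := by
    have h1 := hrel x hx
    rw [h1]
    have : c₀ * D = A 1 := hkey0
    rw [hD] at this ⊢
    nlinarith [this]
  have habs : |ε * (E x * u' x) * D| ≤ M * (ε * (E x * D)) := by
    rw [hkey]
    calc |(A 1 - A x) + A x * E 1| ≤ |A 1 - A x| + |A x * E 1| := abs_add_le _ _
      _ = |A 1 - A x| + |A x| * E 1 := by rw [abs_mul, abs_of_pos (hEpos 1)]
      _ ≤ M * (ε * (E x - E 1)) + M * (ε * (1 - E x)) * E 1 := by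
          have := mul_le_mul_of_nonneg_right hb2 (hEpos 1).le
          rw [hE0] at hb2
          have h2 : |A x| * E 1 ≤ M * (ε * (1 - E x)) * E 1 :=
            mul_le_mul_of_nonneg_right hb2 (hEpos 1).le
          linarith [hb1]
      _ = M * (ε * (E x * D)) := by rw [hD]; ring
  have hpos : 0 < ε * (E x * D) := mul_pos hε (mul_pos (hEpos x) hD0)
  have : |u' x| * (ε * (E x * D)) ≤ M * (ε * (E x * D)) := by
    calc |u' x| * (ε * (E x * D)) = |ε * (E x * u' x) * D| := by
          rw [abs_mul, abs_mul, abs_mul, abs_of_pos hε, abs_of_pos (hEpos x),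
            abs_of_pos hD0]
          ring
      _ ≤ M * (ε * (E x * D)) := habs
  exact le_of_mul_le_mul_right this hpos

/-- Let `f` be continuous on `[0,1]` with zero average and let `u` be a
continuously differentiable solution on `[0,1]` of `−ε u'' + u' = f` on `(0,1)` with
`u(0) = u(1) = 0`. If `u_I` is the piecewise linear interpolant of `u` on the uniform
mesh `x_i = i·h`, `h = 1/n`, then `‖u − u_I‖_{L²(0,1)} ≤ (h/√2) ‖f‖_∞`, a bound
independent of `ε`. -/
theorem statement18 (ε : ℝ) (hε : 0 < ε) (f : ℝ → ℝ)
    (hf : ContinuousOn f (Set.Icc 0 1))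
    (hf0 : (∫ s in (0 : ℝ)..1, f s) = 0)
    (u u' u'' : ℝ → ℝ)
    (hu' : ∀ x ∈ Set.Icc (0 : ℝ) 1, HasDerivWithinAt u (u' x) (Set.Icc 0 1) x)
    (hu'c : ContinuousOn u' (Set.Icc 0 1))
    (hu'' : ∀ x ∈ Set.Ioo (0 : ℝ) 1, HasDerivAt u' (u'' x) x)
    (hode : ∀ x ∈ Set.Ioo (0 : ℝ) 1, -ε * u'' x + u' x = f x)
    (hu0 : u 0 = 0) (hu1 : u 1 = 0)
    (n : ℕ) (hn : 1 ≤ n) (h : ℝ) (hh : h = 1 / n)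
    (uI : ℝ → ℝ)
    (hnode : ∀ i : ℕ, i ≤ n → uI ((i : ℝ) * h) = u ((i : ℝ) * h))
    (haff : ∀ i : ℕ, 1 ≤ i → i ≤ n → ∃ c d : ℝ,
      ∀ x ∈ Set.Icc (((i : ℝ) - 1) * h) ((i : ℝ) * h), uI x = c * x + d) :
    Real.sqrt (∫ x in (0 : ℝ)..1, (u x - uI x) ^ 2) ≤
      h / Real.sqrt 2 * ⨆ s : Set.Icc (0 : ℝ) 1, |f (s : ℝ)| := by
  set M : ℝ := ⨆ s : Set.Icc (0:ℝ) 1, |f (s : ℝ)| with hMdef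
  have hbdd : BddAbove (Set.range fun s : Set.Icc (0:ℝ) 1 => |f (s:ℝ)|) := by
    have h1 : (Set.range fun s : Set.Icc (0:ℝ) 1 => |f (s:ℝ)|)
        = (fun x => |f x|) '' Set.Icc 0 1 := by
      ext y
      constructor
      · rintro ⟨⟨s, hs⟩, rfl⟩; exact ⟨s, hs, rfl⟩
      · rintro ⟨s, hs, rfl⟩; exact ⟨⟨s, hs⟩, rfl⟩
    rw [h1]
    exact (isCompact_Icc.image_of_continuousOn hf.abs).bddAbove
  have hMb : ∀ s ∈ Set.Icc (0:ℝ) 1, |f s| ≤ M := fun s hs => le_ciSup hbdd ⟨s, hs⟩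
  have hM0 : 0 ≤ M := le_trans (abs_nonneg _) (hMb 0 ⟨le_refl _, zero_le_one⟩)
  have hd := st18_deriv_bound ε hε f hf hf0 u u' u'' hu' hu'c hu'' hode hu0 hu1 M hMb
  have hnpos : (0:ℝ) < (n:ℝ) := by exact_mod_cast Nat.lt_of_lt_of_le Nat.zero_lt_one hn
  have hpos : 0 < h := by rw [hh]; positivity
  have hnh : (n:ℝ) * h = 1 := by rw [hh]; field_simp
  have hucont : ContinuousOn u (Set.Icc 0 1) := fun x hx => (hu' x hx).continuousWithinAt
  have hpow : ∀ p q : ℝ, (∫ x in p..q, (x - p)^2) = (q-p)^3/3 := by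
    intro p q
    rw [intervalIntegral.integral_comp_sub_right (fun x => x^2) p]
    rw [integral_pow]
    push_cast
    ring
  have hpow' : ∀ p q : ℝ, (∫ x in p..q, (x - q)^2) = (q-p)^3/3 := by
    intro p q
    rw [intervalIntegral.integral_comp_sub_right (fun x => x^2) q]
    rw [integral_pow]
    push_cast
    ring
  have key : ∀ i : ℕ, i < n →
      IntervalIntegrable (fun x => (u x - uI x)^2) MeasureTheory.volume
        ((i:ℝ)*h) (((i:ℝ)+1)*h) ∧
      (∫ x in ((i:ℝ)*h)..(((i:ℝ)+1)*h), (u x - uI x)^2) ≤ M^2 * h^3 / 3 := by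
    intro i hi
    set a : ℝ := (i:ℝ)*h with ha
    set b : ℝ := ((i:ℝ)+1)*h with hb
    have hba : b - a = h := by rw [ha, hb]; ring
    have hab : a < b := by linarith
    have ha0 : 0 ≤ a := by positivity
    have hin1 : ((i:ℝ)+1) ≤ (n:ℝ) := by exact_mod_cast hi
    have hb1 : b ≤ 1 := by
      have h2 := mul_le_mul_of_nonneg_right hin1 hpos.le
      rw [hnh] at h2
      exact h2
    have hsub : Set.Icc a b ⊆ Set.Icc (0:ℝ) 1 := fun t ht =>
      ⟨le_trans ha0 ht.1, le_trans ht.2 hb1⟩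
    have hsubo : Set.Ioo a b ⊆ Set.Ioo (0:ℝ) 1 := fun t ht =>
      ⟨lt_of_le_of_lt ha0 ht.1, lt_of_lt_of_le ht.2 hb1⟩
    obtain ⟨c, d, hcd⟩ := haff (i+1) (Nat.le_add_left 1 i) hi
    have hca : (((i+1:ℕ):ℝ) - 1) * h = a := by push_cast; ring
    have hcb : ((i+1:ℕ):ℝ) * h = b := by push_cast; ring
    rw [hca, hcb] at hcd
    have huIa : uI a = u a := by rw [ha]; exact hnode i hi.le
    have huIb : uI b = u b := by
      rw [hb, show ((i:ℝ)+1) = ((i+1:ℕ):ℝ) by push_cast; ring]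
      exact hnode (i+1) hi
    have hua : u a = c*a + d := by rw [← huIa]; exact hcd a ⟨le_refl _, hab.le⟩
    have hub : u b = c*b + d := by rw [← huIb]; exact hcd b ⟨hab.le, le_refl _⟩
    -- the slope c is a value of u'
    have hderivAt : ∀ t ∈ Set.Ioo a b, HasDerivAt u (u' t) t := by
      intro t ht
      have ht01 := hsubo ht
      exact (hu' t ⟨ht01.1.le, ht01.2.le⟩).hasDerivAt (Icc_mem_nhds ht01.1 ht01.2)
    obtain ⟨ξ, hξ, hslope⟩ := exists_hasDerivAt_eq_slope u u' hab (hucont.mono hsub) hderivAt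
    have hcM : |c| ≤ M := by
      have h1 : u b - u a = c * (b - a) := by rw [hua, hub]; ring
      have h2 : u' ξ = c := by
        rw [hslope, h1, mul_div_cancel_right₀ _ (ne_of_gt (by linarith : (0:ℝ) < b - a))]
      rw [← h2]
      exact hd ξ (hsubo hξ)
    -- error function bounds
    set w : ℝ → ℝ := fun t => u t - (c*t + d) with hw
    have hwa : w a = 0 := by show u a - (c*a + d) = 0; rw [hua]; ring
    have hwb : w b = 0 := by show u b - (c*b + d) = 0; rw [hub]; ring
    have hwd : ∀ t ∈ Set.Ioo a b, HasDerivAt w (u' t - c) t := by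
      intro t ht
      have h2 : HasDerivAt (fun y : ℝ => c*y + d) c t := by
        simpa using (((hasDerivAt_id t).const_mul c).add_const d)
      exact (hderivAt t ht).sub h2
    have hwcont : ContinuousOn w (Set.Icc a b) :=
      (hucont.mono hsub).sub ((continuous_const.mul continuous_id).add continuous_const).continuousOn
    have hwdiff : ∀ x y, a ≤ x → x < y → y ≤ b → |w y - w x| ≤ 2*M*(y - x) := by
      intro x y hax hxy hyb
      have hIxy : Set.Icc x y ⊆ Set.Icc a b := Set.Icc_subset_Icc hax hyb
      have hOxy : Set.Ioo x y ⊆ Set.Ioo a b := Set.Ioo_subset_Ioo hax hyb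
      obtain ⟨η, hη, hs⟩ := exists_hasDerivAt_eq_slope w (fun t => u' t - c) hxy
        (hwcont.mono hIxy) (fun t ht => hwd t (hOxy ht))
      have hηM : |u' η - c| ≤ 2*M := by
        calc |u' η - c| ≤ |u' η| + |c| := abs_sub _ _
          _ ≤ M + M := add_le_add (hd η (hsubo (hOxy hη))) hcM
          _ = 2*M := by ring
      have heq : w y - w x = (u' η - c) * (y - x) := by
        rw [hs, div_mul_cancel₀ _ (ne_of_gt (by linarith : (0:ℝ) < y - x))]
      rw [heq, abs_mul, abs_of_pos (by linarith : (0:ℝ) < y - x)]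
      exact mul_le_mul_of_nonneg_right hηM (by linarith)
    have hwla : ∀ x ∈ Set.Icc a b, |w x| ≤ 2*M*(x - a) := by
      intro x hx
      rcases eq_or_lt_of_le hx.1 with hax | hax
      · rw [← hax, hwa]; simp
      · have := hwdiff a x (le_refl _) hax hx.2
        rwa [hwa, sub_zero] at this
    have hwlb : ∀ x ∈ Set.Icc a b, |w x| ≤ 2*M*(b - x) := by
      intro x hx
      rcases eq_or_lt_of_le hx.2 with hxb | hxb
      · rw [hxb, hwb]; simp
      · have := hwdiff x b hx.1 hxb (le_refl _)
        rw [hwb, zero_sub, abs_neg] at this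
        exact this
    -- integrals
    set m : ℝ := (a + b)/2 with hm
    have ham : a ≤ m := by rw [hm]; linarith
    have hmb : m ≤ b := by rw [hm]; linarith
    have hEqOn : Set.EqOn (fun x => (u x - uI x)^2) (fun x => (w x)^2) (Set.Icc a b) := by
      intro x hx
      simp only [hw]
      rw [hcd x hx]
    have hwsqcont : ContinuousOn (fun x => (w x)^2) (Set.Icc a b) := hwcont.pow 2
    have hColl : ContinuousOn (fun x => (u x - uI x)^2) (Set.Icc a b) :=
      ContinuousOn.congr hwsqcont hEqOn
    have hInt : IntervalIntegrable (fun x => (u x - uI x)^2) MeasureTheory.volume a b := by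
      apply ContinuousOn.intervalIntegrable
      rwa [Set.uIcc_of_le hab.le]
    refine ⟨hInt, ?_⟩
    have hIeq : (∫ x in a..b, (u x - uI x)^2) = ∫ x in a..b, (w x)^2 := by
      apply intervalIntegral.integral_congr
      rwa [Set.uIcc_of_le hab.le]
    rw [hIeq]
    have hint1 : IntervalIntegrable (fun x => (w x)^2) MeasureTheory.volume a m := by
      apply ContinuousOn.intervalIntegrable
      exact hwsqcont.mono (by rw [Set.uIcc_of_le ham]; exact Set.Icc_subset_Icc (le_refl _) hmb)
    have hint2 : IntervalIntegrable (fun x => (w x)^2) MeasureTheory.volume m b := by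
      apply ContinuousOn.intervalIntegrable
      exact hwsqcont.mono (by rw [Set.uIcc_of_le hmb]; exact Set.Icc_subset_Icc ham (le_refl _))
    rw [← intervalIntegral.integral_add_adjacent_intervals hint1 hint2]
    have hI1 : (∫ x in a..m, (w x)^2) ≤ ∫ x in a..m, (2*M)^2*(x-a)^2 := by
      apply intervalIntegral.integral_mono_on ham hint1
      · exact (continuous_const.mul ((continuous_id.sub continuous_const).pow 2)).intervalIntegrable _ _
      · intro x hx
        have hx' : x ∈ Set.Icc a b := ⟨hx.1, le_trans hx.2 hmb⟩
        have h1 := hwla x hx'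
        calc (w x)^2 = |w x|^2 := (sq_abs _).symm
          _ ≤ (2*M*(x-a))^2 := pow_le_pow_left₀ (abs_nonneg _) h1 2
          _ = (2*M)^2*(x-a)^2 := by ring
    have hI2 : (∫ x in m..b, (w x)^2) ≤ ∫ x in m..b, (2*M)^2*(x-b)^2 := by
      apply intervalIntegral.integral_mono_on hmb hint2
      · exact (continuous_const.mul ((continuous_id.sub continuous_const).pow 2)).intervalIntegrable _ _
      · intro x hx
        have hx' : x ∈ Set.Icc a b := ⟨le_trans ham hx.1, hx.2⟩
        have h1 := hwlb x hx'
        calc (w x)^2 = |w x|^2 := (sq_abs _).symm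
          _ ≤ (2*M*(b-x))^2 := pow_le_pow_left₀ (abs_nonneg _) h1 2
          _ = (2*M)^2*(x-b)^2 := by ring
    have hC1 : (∫ x in a..m, (2*M)^2*(x-a)^2) = (2*M)^2 * ((m-a)^3/3) := by
      rw [intervalIntegral.integral_const_mul, hpow]
    have hC2 : (∫ x in m..b, (2*M)^2*(x-b)^2) = (2*M)^2 * ((b-m)^3/3) := by
      rw [intervalIntegral.integral_const_mul, hpow']
    have hma : m - a = h/2 := by rw [hm]; linarith
    have hbm : b - m = h/2 := by rw [hm]; linarith
    calc (∫ x in a..m, (w x)^2) + ∫ x in m..b, (w x)^2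
        ≤ (2*M)^2 * ((m-a)^3/3) + (2*M)^2 * ((b-m)^3/3) := by
          rw [← hC1, ← hC2]; exact add_le_add hI1 hI2
      _ = M^2 * h^3 / 3 := by rw [hma, hbm]; ring
  -- sum over intervals
  have hintk : ∀ k < n, IntervalIntegrable (fun x => (u x - uI x)^2) MeasureTheory.volume
      ((fun j : ℕ => (j:ℝ)*h) k) ((fun j : ℕ => (j:ℝ)*h) (k+1)) := by
    intro k hk
    have h2 := (key k hk).1
    have e2 : ((fun j : ℕ => (j:ℝ)*h) (k+1)) = ((k:ℝ)+1)*h := by push_cast; ring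
    rw [e2]
    exact h2
  have hsum := intervalIntegral.sum_integral_adjacent_intervals
    (a := fun j : ℕ => (j:ℝ)*h) (n := n) (μ := MeasureTheory.volume)
    (f := fun x => (u x - uI x)^2) hintk
  simp only [Nat.cast_zero, zero_mul, Nat.cast_add, Nat.cast_one] at hsum
  rw [hnh] at hsum
  have htot : (∫ x in (0:ℝ)..1, (u x - uI x)^2) ≤ M^2 * h^2 / 3 := by
    rw [← hsum]
    calc (∑ k ∈ Finset.range n, ∫ x in ((k:ℝ)*h)..(((k:ℝ)+1)*h), (u x - uI x)^2)
        ≤ ∑ k ∈ Finset.range n, M^2*h^3/3 :=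
          Finset.sum_le_sum (fun k hk => (key k (Finset.mem_range.mp hk)).2)
      _ = (n:ℝ) * (M^2*h^3/3) := by
          rw [Finset.sum_const, Finset.card_range, nsmul_eq_mul]
      _ = M^2 * h^2 / 3 := by linear_combination (M^2*h^2/3) * hnh
  have h23 : (∫ x in (0:ℝ)..1, (u x - uI x)^2) ≤ M^2 * h^2 / 2 := by
    have h4 : (0:ℝ) ≤ M^2 * h^2 := by positivity
    linarith
  calc Real.sqrt (∫ x in (0:ℝ)..1, (u x - uI x)^2)
      ≤ Real.sqrt (M^2 * h^2 / 2) := Real.sqrt_le_sqrt h23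
    _ = h / Real.sqrt 2 * M := by
        rw [show M^2 * h^2 / 2 = (h*M)^2/2 by ring]
        rw [Real.sqrt_div (sq_nonneg _)]
        rw [Real.sqrt_sq (by positivity : (0:ℝ) ≤ h*M)]
        ring
end

section
/- Let ε > 0, let f : [0,1] → ℝ be continuous with ∫₀¹ f(s) ds = 0, and let u be twice continuously differentiable on [0,1], satisfying −ε u''(x) + u'(x) = f(x) on (0,1) and u(0) = u(1) = 0. Let n ≥ 1, h = 1/n, and let u_I be the piecewise linear interpolant of u on the uniform mesh x_i = i·h. Then (∫₀¹ (u(x) − u_I(x))² dx)^{1/2} ≤ (2/(ε π)) h² ‖f‖_∞, where ‖f‖_∞ = sup_{s∈[0,1]} |f(s)|. -/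
open Set MeasureTheory intervalIntegral


lemma myftc {a b : ℝ} (hab : a ≤ b) {g g' : ℝ → ℝ}
    (hc : ContinuousOn g (Icc a b))
    (hd : ∀ x ∈ Ioo a b, HasDerivAt g (g' x) x)
    (hi : IntervalIntegrable g' volume a b) :
    ∫ x in a..b, g' x = g b - g a :=
  integral_eq_sub_of_hasDeriv_right_of_le hab hc
    (fun x hx => (hd x hx).hasDerivWithinAt) hi

lemma deriv_bd (ε : ℝ) (hε : 0 < ε) (f : ℝ → ℝ)
    (hf : ContinuousOn f (Set.Icc 0 1))
    (hf0 : (∫ s in (0 : ℝ)..1, f s) = 0)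
    (u u' u'' : ℝ → ℝ)
    (hu' : ∀ x ∈ Set.Icc (0 : ℝ) 1, HasDerivWithinAt u (u' x) (Set.Icc 0 1) x)
    (hu'' : ∀ x ∈ Set.Icc (0 : ℝ) 1, HasDerivWithinAt u' (u'' x) (Set.Icc 0 1) x)
    (hu''c : ContinuousOn u'' (Set.Icc 0 1))
    (hode : ∀ x ∈ Set.Ioo (0 : ℝ) 1, -ε * u'' x + u' x = f x)
    (hu0 : u 0 = 0) (hu1 : u 1 = 0)
    (M : ℝ) (hMb : ∀ x ∈ Set.Icc (0:ℝ) 1, |f x| ≤ M) :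
    ∀ x ∈ Set.Icc (0:ℝ) 1, |u' x| ≤ M := by
  have hM0 : 0 ≤ M := le_trans (abs_nonneg _) (hMb 0 (by norm_num))
  -- continuity facts
  have hcu : ContinuousOn u (Icc 0 1) := fun x hx => (hu' x hx).continuousWithinAt
  have hcu' : ContinuousOn u' (Icc 0 1) := fun x hx => (hu'' x hx).continuousWithinAt
  -- interior HasDerivAt
  have hu'at : ∀ x ∈ Ioo (0:ℝ) 1, HasDerivAt u (u' x) x := fun x hx =>
    (hu' x (Ioo_subset_Icc_self hx)).hasDerivAt (Icc_mem_nhds hx.1 hx.2)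
  have hu''at : ∀ x ∈ Ioo (0:ℝ) 1, HasDerivAt u' (u'' x) x := fun x hx =>
    (hu'' x (Ioo_subset_Icc_self hx)).hasDerivAt (Icc_mem_nhds hx.1 hx.2)
  set E : ℝ → ℝ := fun t => Real.exp (-(t/ε)) with hEdef
  have hEpos : ∀ t, 0 < E t := fun t => Real.exp_pos _
  have hE : ∀ t : ℝ, HasDerivAt E (E t * (-(1/ε))) t := fun t =>
    (Real.hasDerivAt_exp _).comp t (((hasDerivAt_id t).div_const ε).neg)
  have hEc : Continuous E := (continuous_id.div_const ε).neg.rexp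
  -- integrability helpers
  have hintEf : ∀ x ∈ Icc (0:ℝ) 1, IntervalIntegrable (fun s => E s * f s) volume x 1 := by
    intro x hx
    apply ContinuousOn.intervalIntegrable
    have : uIcc x 1 ⊆ Icc (0:ℝ) 1 := by
      rw [uIcc_of_le hx.2]; exact Icc_subset_Icc hx.1 le_rfl
    exact (hEc.continuousOn.mul (hf.mono this))
  -- FTC for E antiderivative
  have hEint : ∀ x ∈ Icc (0:ℝ) 1, ∫ s in x..1, E s = ε * (E x - E 1) := by
    intro x hx
    have hA : ∀ t ∈ uIcc x 1, HasDerivAt (fun s => -ε * E s) (E t) t := by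
      intro t _
      have := (hE t).const_mul (-ε)
      have heq : -ε * (E t * (-(1/ε))) = E t := by field_simp
      rw [heq] at this; exact this
    have := integral_eq_sub_of_hasDerivAt hA
      (ContinuousOn.intervalIntegrable hEc.continuousOn)
    rw [this]; ring
  -- bound for ∫ E f
  have hEfbd : ∀ x ∈ Icc (0:ℝ) 1, |∫ s in x..1, E s * f s| ≤ M * (ε * (E x - E 1)) := by
    intro x hx
    have h1 : |∫ s in x..1, E s * f s| ≤ ∫ s in x..1, |E s * f s| :=
      abs_integral_le_integral_abs hx.2
    have h2 : ∫ s in x..1, |E s * f s| ≤ ∫ s in x..1, M * E s := by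
      apply integral_mono_on hx.2 ((hintEf x hx).abs)
      · exact (ContinuousOn.intervalIntegrable (continuous_const.mul hEc).continuousOn)
      · intro t ht
        have ht' : t ∈ Icc (0:ℝ) 1 := ⟨le_trans hx.1 ht.1, ht.2⟩
        rw [abs_mul, abs_of_pos (hEpos t)]
        calc E t * |f t| ≤ E t * M := by
              exact mul_le_mul_of_nonneg_left (hMb t ht') (le_of_lt (hEpos t))
          _ = M * E t := mul_comm _ _
    have h3 : ∫ s in x..1, M * E s = M * (ε * (E x - E 1)) := by
      rw [intervalIntegral.integral_const_mul, hEint x hx]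
    linarith
  -- key identity
  have hkey : ∀ x ∈ Icc (0:ℝ) 1,
      E x * u' x - E 1 * u' 1 = (1/ε) * ∫ s in x..1, E s * f s := by
    intro x hx
    have hd : ∀ t ∈ Ioo x 1, HasDerivAt (fun s => E s * u' s)
        (-(1/ε) * (E t * f t)) t := by
      intro t ht
      have ht' : t ∈ Ioo (0:ℝ) 1 := ⟨lt_of_le_of_lt hx.1 ht.1, ht.2⟩
      have := (hE t).mul (hu''at t ht')
      have hodet := hode t ht'
      have heq : E t * (-(1/ε)) * u' t + E t * u'' t = -(1/ε) * (E t * f t) := by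
        have : f t = -ε * u'' t + u' t := (hodet).symm
        rw [this]; field_simp; ring
      rw [heq] at this; exact this
    have hsub : Icc x 1 ⊆ Icc (0:ℝ) 1 := Icc_subset_Icc hx.1 le_rfl
    have hint : IntervalIntegrable (fun s => -(1/ε) * (E s * f s)) volume x 1 :=
      (hintEf x hx).const_mul _
    have := myftc hx.2 ((hEc.continuousOn.mul (hcu'.mono hsub))) hd hint
    rw [intervalIntegral.integral_const_mul] at this
    have := this.symm
    simp only [Pi.mul_apply] at this
    linarith [this]
  -- ∫ u' = 0
  have hi1 : ∫ x in (0:ℝ)..1, u' x = 0 := by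
    rw [myftc zero_le_one hcu hu'at (ContinuousOn.intervalIntegrable (by
      rw [uIcc_of_le zero_le_one]; exact hcu'))]
    rw [hu0, hu1]; ring
  -- ∫ u'' = u'1 - u'0
  have hi2 : ∫ x in (0:ℝ)..1, u'' x = u' 1 - u' 0 := by
    exact myftc zero_le_one hcu' hu''at (ContinuousOn.intervalIntegrable (by
      rw [uIcc_of_le zero_le_one]; exact hu''c))
  -- u' 1 = u' 0
  have hper : u' 1 = u' 0 := by
    have hae : ∀ᵐ x : ℝ, x ∈ uIoc (0:ℝ) 1 → (-ε * u'' x + u' x) = f x := by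
      have h1 : ∀ᵐ x : ℝ, x ≠ 1 := by
        refine MeasureTheory.ae_iff.mpr ?_
        have hset : {x : ℝ | ¬ x ≠ 1} = {1} := by ext x; simp
        rw [hset]
        exact measure_singleton 1
      filter_upwards [h1] with x hx1 hxI
      rw [uIoc_of_le zero_le_one] at hxI
      exact hode x ⟨hxI.1, lt_of_le_of_ne hxI.2 hx1⟩
    have hcongr : ∫ x in (0:ℝ)..1, (-ε * u'' x + u' x) = ∫ x in (0:ℝ)..1, f x :=
      integral_congr_ae hae
    have hintu'' : IntervalIntegrable (fun x => -ε * u'' x) volume 0 1 :=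
      (ContinuousOn.intervalIntegrable (by
        rw [uIcc_of_le zero_le_one]; exact hu''c)).const_mul _
    have hintu' : IntervalIntegrable u' volume 0 1 :=
      ContinuousOn.intervalIntegrable (by rw [uIcc_of_le zero_le_one]; exact hcu')
    rw [integral_add hintu'' hintu', intervalIntegral.integral_const_mul, hi1, hi2, hf0] at hcongr
    have : -ε * (u' 1 - u' 0) = 0 := by linarith
    have := mul_eq_zero.mp this
    rcases this with h | h
    · exfalso; linarith
    · linarith
  -- bound on u' 1
  have hb1 : |u' 1| ≤ M := by
    have h0 : (0:ℝ) ∈ Icc (0:ℝ) 1 := by norm_num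
    have hk := hkey 0 h0
    have hE0 : E 0 = 1 := by simp [hEdef]
    rw [hE0, one_mul, hper] at hk
    -- hk : u' 0 - E 1 * u' 0 = (1/ε) * ∫ s in 0..1, E s * f s
    have hbd := hEfbd 0 h0
    rw [hE0] at hbd
    have hE1lt : E 1 < 1 := by
      rw [hEdef]
      simp only
      have hp : (0:ℝ) < 1/ε := by positivity
      calc Real.exp (-(1/ε)) < Real.exp 0 := Real.exp_lt_exp.mpr (by linarith)
        _ = 1 := Real.exp_zero
    have habs : |u' 0| * (1 - E 1) ≤ M * (1 - E 1) := by
      have h1 : |u' 0 * (1 - E 1)| = |u' 0| * (1 - E 1) := by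
        rw [abs_mul, abs_of_pos (by linarith : (0:ℝ) < 1 - E 1)]
      have h2 : u' 0 * (1 - E 1) = (1/ε) * ∫ s in (0:ℝ)..1, E s * f s := by
        linarith [hk]
      rw [← h1, h2, abs_mul, abs_of_pos (by positivity : (0:ℝ) < 1/ε)]
      calc (1/ε) * |∫ s in (0:ℝ)..1, E s * f s| ≤ (1/ε) * (M * (ε * (1 - E 1))) :=
            mul_le_mul_of_nonneg_left hbd (by positivity)
        _ = M * (1 - E 1) := by field_simp <;> ring
    rw [hper]
    exact le_of_mul_le_mul_right habs (by linarith)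
  -- final bound
  intro x hx
  have hk := hkey x hx
  have hbd := hEfbd x hx
  have hExpos := hEpos x
  have hE1pos := hEpos 1
  have hE1leEx : E 1 ≤ E x := by
    rw [hEdef]; simp only
    apply Real.exp_le_exp.mpr
    have hxe : x / ε ≤ 1 / ε := (div_le_div_iff_of_pos_right hε).mpr hx.2
    linarith
  have hEu : |E x * u' x| ≤ M * E x := by
    have h1 : E x * u' x = E 1 * u' 1 + (1/ε) * ∫ s in x..1, E s * f s := by linarith
    have h2 : |E 1 * u' 1| ≤ E 1 * M := by
      rw [abs_mul, abs_of_pos hE1pos]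
      exact mul_le_mul_of_nonneg_left hb1 hE1pos.le
    have h3 : |(1/ε) * ∫ s in x..1, E s * f s| ≤ (1/ε) * (M * (ε * (E x - E 1))) := by
      rw [abs_mul, abs_of_pos (show (0:ℝ) < 1/ε by positivity)]
      exact mul_le_mul_of_nonneg_left hbd (by positivity)
    have h4 : (1/ε) * (M * (ε * (E x - E 1))) = M * (E x - E 1) := by
      field_simp <;> ring
    have h5 : |E x * u' x| ≤ |E 1 * u' 1| + |(1/ε) * ∫ s in x..1, E s * f s| := by
      rw [h1]; exact abs_add_le _ _
    have h6 : E 1 * M + M * (E x - E 1) = M * E x := by ring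
    linarith
  rw [abs_mul, abs_of_pos hExpos] at hEu
  have h7 : E x * |u' x| ≤ E x * M := by linarith [hEu]
  exact le_of_mul_le_mul_left h7 hExpos


lemma interp_bd (a b : ℝ) (hab : a < b) (ha : 0 ≤ a) (hb : b ≤ 1)
    (u u' u'' : ℝ → ℝ)
    (hcu : ContinuousOn u (Icc 0 1)) (hcu' : ContinuousOn u' (Icc 0 1))
    (hu'at : ∀ x ∈ Ioo (0:ℝ) 1, HasDerivAt u (u' x) x)
    (hu''at : ∀ x ∈ Ioo (0:ℝ) 1, HasDerivAt u' (u'' x) x)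
    (K2 : ℝ) (hK2 : ∀ x ∈ Ioo (0:ℝ) 1, |u'' x| ≤ K2)
    (c d : ℝ) (hca : u a = c*a + d) (hcb : u b = c*b + d)
    (x : ℝ) (hx : x ∈ Icc a b) :
    |u x - (c*x + d)| ≤ K2 * (b-a)^2 / 8 := by
  have hK20 : 0 ≤ K2 := by
    have hmid : (a+b)/2 ∈ Ioo (0:ℝ) 1 := ⟨by linarith, by linarith⟩
    exact le_trans (abs_nonneg _) (hK2 _ hmid)
  rcases eq_or_lt_of_le hx.1 with rfl | hax
  · rw [hca]; simp
    positivity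
  rcases eq_or_lt_of_le hx.2 with rfl | hxb
  · rw [hcb]; simp
    positivity
  -- interior case
  set K : ℝ := (u x - (c*x + d)) / ((x-a)*(x-b)) with hKdef
  have hprod : (x-a)*(x-b) ≠ 0 := by
    have : x - a > 0 := by linarith
    have : x - b < 0 := by linarith
    intro hc
    rcases mul_eq_zero.mp hc with h | h <;> linarith
  set q : ℝ → ℝ := fun t => c*t + d + K*((t-a)*(t-b)) with hqdef
  set q' : ℝ → ℝ := fun t => c + K*((t-b)+(t-a)) with hq'def
  have hq : ∀ t : ℝ, HasDerivAt q (q' t) t := by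
    intro t
    have h1 : HasDerivAt (fun t : ℝ => c*t + d) c t := by
      simpa using ((hasDerivAt_id t).const_mul c).add_const d
    have h2 : HasDerivAt (fun t : ℝ => (t-a)*(t-b)) (1*(t-b)+(t-a)*1) t :=
      ((hasDerivAt_id t).sub_const a).mul ((hasDerivAt_id t).sub_const b)
    have h3 := h1.add (h2.const_mul K)
    exact h3.congr_deriv (by simp only [hq'def]; ring)
  have hq' : ∀ t : ℝ, HasDerivAt q' (K*2) t := by
    intro t
    have h2 : HasDerivAt (fun t : ℝ => (t-b)+(t-a)) (1+1) t :=
      ((hasDerivAt_id t).sub_const b).add ((hasDerivAt_id t).sub_const a)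
    have h3 := (h2.const_mul K).const_add c
    exact h3.congr_deriv (by ring)
  have hsub1 : Icc a b ⊆ Icc (0:ℝ) 1 := Icc_subset_Icc ha hb
  have hsubo : Ioo a b ⊆ Ioo (0:ℝ) 1 := Ioo_subset_Ioo ha hb
  have hqc : Continuous q := by
    rw [hqdef]; fun_prop
  have hφc : ContinuousOn (fun t => u t - q t) (Icc a b) :=
    (hcu.mono hsub1).sub hqc.continuousOn
  have hφd : ∀ t ∈ Ioo a b, HasDerivAt (fun t => u t - q t) (u' t - q' t) t :=
    fun t ht => (hu'at t (hsubo ht)).sub (hq t)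
  have hφa : u a - q a = 0 := by rw [hqdef]; simp; rw [hca]; ring
  have hφb : u b - q b = 0 := by rw [hqdef]; simp; rw [hcb]; ring
  have hφx : u x - q x = 0 := by
    rw [hqdef]; simp only
    have : K*((x-a)*(x-b)) = u x - (c*x + d) := by
      rw [hKdef]; field_simp [sub_ne_zero.mpr (ne_of_lt hxb)]
    linarith
  -- Rolle on [a,x]
  obtain ⟨ξ₁, hξ₁, hdξ₁⟩ := exists_hasDerivAt_eq_zero hax
    (hφc.mono (Icc_subset_Icc le_rfl hx.2)) (by rw [hφa, hφx])
    (fun t ht => hφd t ⟨ht.1, lt_trans ht.2 hxb⟩)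
  -- Rolle on [x,b]
  obtain ⟨ξ₂, hξ₂, hdξ₂⟩ := exists_hasDerivAt_eq_zero hxb
    (hφc.mono (Icc_subset_Icc hx.1 le_rfl)) (by rw [hφx, hφb])
    (fun t ht => hφd t ⟨lt_trans hax ht.1, ht.2⟩)
  -- Rolle on [ξ₁, ξ₂]
  have hξξ : ξ₁ < ξ₂ := lt_trans hξ₁.2 hξ₂.1
  have hsub2 : Icc ξ₁ ξ₂ ⊆ Icc (0:ℝ) 1 := by
    apply Icc_subset_Icc <;> [linarith [hξ₁.1]; linarith [hξ₂.2]]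
  have hq'c : Continuous q' := by fun_prop
  obtain ⟨η, hη, hdη⟩ := exists_hasDerivAt_eq_zero hξξ
    ((hcu'.mono hsub2).sub hq'c.continuousOn) (by simp only [Pi.sub_apply]; rw [hdξ₁, hdξ₂])
    (fun t ht => by
      have ht' : t ∈ Ioo (0:ℝ) 1 :=
        ⟨by linarith [hξ₁.1, ht.1], by linarith [hξ₂.2, ht.2]⟩
      exact (hu''at t ht').sub (hq' t))
  have hη' : η ∈ Ioo (0:ℝ) 1 :=
    ⟨by linarith [hξ₁.1, hη.1], by linarith [hξ₂.2, hη.2]⟩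
  have hKval : K = u'' η / 2 := by linarith [hdη]
  have hKbd : |K| ≤ K2 / 2 := by
    rw [hKval, abs_div]
    have := hK2 η hη'
    rw [abs_of_pos (by norm_num : (0:ℝ) < 2)]
    linarith
  have heq : u x - (c*x + d) = K * ((x-a)*(x-b)) := by
    rw [hKdef]; field_simp [sub_ne_zero.mpr (ne_of_lt hxb)]
  rw [heq, abs_mul]
  have habs2 : |(x-a)*(x-b)| = (x-a)*(b-x) := by
    rw [abs_mul, abs_of_pos (by linarith : (0:ℝ) < x - a),
      abs_of_neg (by linarith : x - b < 0)]
    ring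
  rw [habs2]
  have hAM : (x-a)*(b-x) ≤ (b-a)^2/4 := by nlinarith [sq_nonneg (b - x - (x - a))]
  have := abs_nonneg K
  nlinarith [mul_le_mul hKbd hAM (by nlinarith) (by linarith)]



/-- Let `f` be continuous on `[0,1]` with zero average and let `u` be a
twice continuously differentiable solution on `[0,1]` of `−ε u'' + u' = f` on `(0,1)`
with `u(0) = u(1) = 0`. If `u_I` is the piecewise linear interpolant of `u` on the
uniform mesh `x_i = i·h`, `h = 1/n`, then
`‖u − u_I‖_{L²(0,1)} ≤ (2/(επ)) h² ‖f‖_∞`. -/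
theorem statement19 (ε : ℝ) (hε : 0 < ε) (f : ℝ → ℝ)
    (hf : ContinuousOn f (Set.Icc 0 1))
    (hf0 : (∫ s in (0 : ℝ)..1, f s) = 0)
    (u u' u'' : ℝ → ℝ)
    (hu' : ∀ x ∈ Set.Icc (0 : ℝ) 1, HasDerivWithinAt u (u' x) (Set.Icc 0 1) x)
    (hu'' : ∀ x ∈ Set.Icc (0 : ℝ) 1, HasDerivWithinAt u' (u'' x) (Set.Icc 0 1) x)
    (hu''c : ContinuousOn u'' (Set.Icc 0 1))
    (hode : ∀ x ∈ Set.Ioo (0 : ℝ) 1, -ε * u'' x + u' x = f x)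
    (hu0 : u 0 = 0) (hu1 : u 1 = 0)
    (n : ℕ) (hn : 1 ≤ n) (h : ℝ) (hh : h = 1 / n)
    (uI : ℝ → ℝ)
    (hnode : ∀ i : ℕ, i ≤ n → uI ((i : ℝ) * h) = u ((i : ℝ) * h))
    (haff : ∀ i : ℕ, 1 ≤ i → i ≤ n → ∃ c d : ℝ,
      ∀ x ∈ Set.Icc (((i : ℝ) - 1) * h) ((i : ℝ) * h), uI x = c * x + d) :
    Real.sqrt (∫ x in (0 : ℝ)..1, (u x - uI x) ^ 2) ≤
      2 / (ε * Real.pi) * h ^ 2 * ⨆ s : Set.Icc (0 : ℝ) 1, |f (s : ℝ)| := by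
  set M : ℝ := ⨆ s : Set.Icc (0 : ℝ) 1, |f (s : ℝ)| with hM
  have hMb : ∀ x ∈ Set.Icc (0:ℝ) 1, |f x| ≤ M := by
    have hbdd : BddAbove (Set.range fun s : Set.Icc (0:ℝ) 1 => |f (s:ℝ)|) := by
      have h1 : IsCompact ((fun x => |f x|) '' Set.Icc (0:ℝ) 1) :=
        isCompact_Icc.image_of_continuousOn hf.abs
      have h2 : Set.range (fun s : Set.Icc (0:ℝ) 1 => |f (s:ℝ)|) =
          (fun x => |f x|) '' Set.Icc (0:ℝ) 1 := by
        ext y; simp [Set.mem_image]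
      rw [h2]; exact h1.bddAbove
    intro x hx
    exact le_ciSup hbdd ⟨x, hx⟩
  have hM0 : 0 ≤ M := le_trans (abs_nonneg _) (hMb 0 (by norm_num))
  have hcu : ContinuousOn u (Icc 0 1) := fun x hx => (hu' x hx).continuousWithinAt
  have hcu' : ContinuousOn u' (Icc 0 1) := fun x hx => (hu'' x hx).continuousWithinAt
  have hu'at : ∀ x ∈ Ioo (0:ℝ) 1, HasDerivAt u (u' x) x := fun x hx =>
    (hu' x (Ioo_subset_Icc_self hx)).hasDerivAt (Icc_mem_nhds hx.1 hx.2)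
  have hu''at : ∀ x ∈ Ioo (0:ℝ) 1, HasDerivAt u' (u'' x) x := fun x hx =>
    (hu'' x (Ioo_subset_Icc_self hx)).hasDerivAt (Icc_mem_nhds hx.1 hx.2)
  have hu'bd : ∀ x ∈ Set.Icc (0:ℝ) 1, |u' x| ≤ M :=
    deriv_bd ε hε f hf hf0 u u' u'' hu' hu'' hu''c hode hu0 hu1 M hMb
  have interp : ∀ (a b : ℝ), a < b → 0 ≤ a → b ≤ 1 →
      ∀ (K2 : ℝ), (∀ x ∈ Ioo (0:ℝ) 1, |u'' x| ≤ K2) →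
      ∀ (c d : ℝ), u a = c*a + d → u b = c*b + d →
      ∀ x ∈ Icc a b, |u x - (c*x + d)| ≤ K2 * (b-a)^2 / 8 :=
    fun a b hab ha hb K2 hK2 c d hca hcb x hx =>
      interp_bd a b hab ha hb u u' u'' hcu hcu' hu'at hu''at K2 hK2 c d hca hcb x hx
  have hnpos : (0:ℝ) < n := by exact_mod_cast hn
  have hhpos : 0 < h := by rw [hh]; positivity
  have hnh : (n:ℝ) * h = 1 := by rw [hh]; field_simp
  -- u'' bound
  have hu''bd : ∀ x ∈ Ioo (0:ℝ) 1, |u'' x| ≤ 2*M/ε := by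
    intro x hx
    have hodex := hode x hx
    have h1 : u'' x = (u' x - f x)/ε := by field_simp; linarith
    rw [h1, abs_div, abs_of_pos hε]
    rw [div_le_div_iff₀ hε hε] ; ring_nf
    have := abs_sub (u' x) (f x)
    have h2 : |u' x - f x| ≤ 2*M := by
      calc |u' x - f x| ≤ |u' x| + |f x| := abs_sub _ _
        _ ≤ M + M := add_le_add (hu'bd x (Ioo_subset_Icc_self hx)) (hMb x (Ioo_subset_Icc_self hx))
        _ = 2*M := by ring
    nlinarith
  -- pointwise bound
  have hptw : ∀ x ∈ Icc (0:ℝ) 1, |u x - uI x| ≤ (2*M/ε) * h^2 / 8 := by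
    intro x hx
    -- find the interval index
    set i : ℕ := max 1 ⌈x * n⌉₊ with hidef
    have hi1 : 1 ≤ i := le_max_left _ _
    have hin : i ≤ n := by
      apply max_le hn
      apply Nat.ceil_le.mpr
      calc x * n ≤ 1 * n := by
            apply mul_le_mul_of_nonneg_right hx.2 (le_of_lt hnpos)
        _ = (n:ℝ) := by ring
    set a : ℝ := ((i:ℝ) - 1) * h with hadef
    set b : ℝ := (i:ℝ) * h with hbdef
    have hab : a < b := by
      rw [hadef, hbdef]
      have : (i:ℝ) - 1 < (i:ℝ) := by linarith
      exact mul_lt_mul_of_pos_right this hhpos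
    have hia : (1:ℝ) ≤ (i:ℝ) := by exact_mod_cast hi1
    have ha0 : 0 ≤ a := by
      rw [hadef]
      apply mul_nonneg (by linarith) (le_of_lt hhpos)
    have hb1 : b ≤ 1 := by
      rw [hbdef, ← hnh]
      apply mul_le_mul_of_nonneg_right _ (le_of_lt hhpos)
      exact_mod_cast hin
    have hxa : a ≤ x := by
      rw [hadef]
      rcases le_or_gt ⌈x * n⌉₊ 1 with hc | hc
      · have : i = 1 := by rw [hidef]; omega
        rw [this]
        simpa using hx.1
      · have hieq : i = ⌈x * n⌉₊ := by rw [hidef]; omega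
        have h2 : ((⌈x * n⌉₊:ℝ)) < x * n + 1 :=
          Nat.ceil_lt_add_one (mul_nonneg hx.1 hnpos.le)
        have h3 : (i:ℝ) - 1 ≤ x * n := by rw [hieq]; linarith
        calc ((i:ℝ) - 1) * h ≤ (x * n) * h := by
              apply mul_le_mul_of_nonneg_right h3 (le_of_lt hhpos)
          _ = x * ((n:ℝ) * h) := by ring
          _ = x := by rw [hnh]; ring
    have hxb : x ≤ b := by
      rw [hbdef]
      have h2 : x * n ≤ (⌈x * n⌉₊:ℝ) := Nat.le_ceil _
      have h3 : (⌈x * n⌉₊:ℝ) ≤ (i:ℝ) := by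
        exact_mod_cast le_max_right 1 ⌈x * n⌉₊
      calc x = x * ((n:ℝ) * h) := by rw [hnh]; ring
        _ = (x * n) * h := by ring
        _ ≤ (i:ℝ) * h := mul_le_mul_of_nonneg_right (by linarith) (le_of_lt hhpos)
    obtain ⟨c, d, hcd⟩ := haff i hi1 hin
    -- node values
    have hcast : ((i:ℝ) - 1) = ((i - 1 : ℕ) : ℝ) := by
      have : (1:ℕ) ≤ i := hi1
      push_cast [Nat.cast_sub this]
      ring
    have hua : u a = c * a + d := by
      have h1 : uI a = c * a + d := hcd a ⟨le_rfl, le_of_lt hab⟩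
      have h2 : uI a = u a := by
        rw [hadef, hcast]
        exact hnode (i-1) (le_trans (Nat.sub_le i 1) hin)
      rw [← h2, h1]
    have hub : u b = c * b + d := by
      have h1 : uI b = c * b + d := hcd b ⟨le_of_lt hab, le_rfl⟩
      have h2 : uI b = u b := hnode i hin
      rw [← h2, h1]
    have huIx : uI x = c * x + d := hcd x ⟨hxa, hxb⟩
    have hba : b - a = h := by rw [hadef, hbdef]; ring
    have := interp a b hab ha0 hb1 (2*M/ε) hu''bd c d hua hub x ⟨hxa, hxb⟩
    rw [hba] at this
    rw [huIx]
    linarith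
  -- final constant
  set C : ℝ := 2 / (ε * Real.pi) * h ^ 2 * M with hCdef
  have hC0 : 0 ≤ C := by
    rw [hCdef]
    have := Real.pi_pos
    positivity
  have hle : (2*M/ε) * h^2 / 8 ≤ C := by
    have hpipos := Real.pi_pos
    have hpine : Real.pi ≠ 0 := ne_of_gt hpipos
    have hεne : ε ≠ 0 := ne_of_gt hε
    have hq : (0:ℝ) ≤ M*h^2/ε := by positivity
    have hfrac : (1:ℝ)/4 ≤ 2/Real.pi := by
      rw [div_le_div_iff₀ (by norm_num) hpipos]
      linarith [Real.pi_le_four]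
    rw [hCdef]
    calc 2*M/ε * h^2 / 8 = (M*h^2/ε) * (1/4) := by ring
      _ ≤ (M*h^2/ε) * (2/Real.pi) := mul_le_mul_of_nonneg_left hfrac hq
      _ = 2/(ε*Real.pi) * h^2 * M := by field_simp
  have hsq : ∀ x ∈ Icc (0:ℝ) 1, (u x - uI x)^2 ≤ C^2 := by
    intro x hx
    have h1 := le_trans (hptw x hx) hle
    calc (u x - uI x)^2 = |u x - uI x|^2 := (sq_abs _).symm
      _ ≤ C^2 := pow_le_pow_left₀ (abs_nonneg _) h1 2
  by_cases hint : IntervalIntegrable (fun x => (u x - uI x)^2) volume 0 1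
  · have h1 : (∫ x in (0:ℝ)..1, (u x - uI x)^2) ≤ ∫ x in (0:ℝ)..1, C^2 :=
      integral_mono_on zero_le_one hint intervalIntegrable_const hsq
    have h2 : (∫ x in (0:ℝ)..1, C^2) = C^2 := by simp
    calc Real.sqrt (∫ x in (0:ℝ)..1, (u x - uI x)^2)
        ≤ Real.sqrt (C^2) := Real.sqrt_le_sqrt (h1.trans (le_of_eq h2))
      _ = C := Real.sqrt_sq hC0
  · rw [integral_undef hint, Real.sqrt_zero]
    exact hC0
end
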